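/- arXiv:2512.00286 — 3 statements merged into one kernel-verified Lean document; each statement's English description precedes it below -/
import Mathlib

section
/- Let (H, B) be a Rota–Baxter Hopf algebra of weight −1 and define B̃ : H → H by B̃(x) = x₁ B(S(x₂)). Then for all x ∈ H the following identities hold: B̃(B(x)) = B(S(B̃(S(x)))) and B(B̃(x)) = B̃(S(B(S(x)))). -/
set_option synthInstance.maxHeartbeats 1000000
set_option maxHeartbeats 1000000
set_option linter.unusedSectionVars false


open TensorProduct LinearMap

noncomputable section

universe u

variable {K H : Type u} [Field K] [CharZero K] [Ring H] [HopfAlgebra K H]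

/-- The antipode of `H` as a `K`-linear map. -/
def aS (K H : Type u) [Field K] [Ring H] [HopfAlgebra K H] : H →ₗ[K] H :=
  HopfAlgebra.antipode K

/-- Convolution-type composite: `conv f g x = f x₁ * g x₂` in Sweedler notation,
where the source may be any coalgebra `C`. -/
def conv {C : Type u} [AddCommGroup C] [Module K C] [Coalgebra K C]
    (f g : C →ₗ[K] H) : C →ₗ[K] H :=
  LinearMap.mul' K H ∘ₗ TensorProduct.map f g ∘ₗ Coalgebra.comul

/-- `wrap f g h (a ⊗ₜ c) = f a₁ * (g c * h a₂)` in Sweedler notation. -/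
def wrap {C : Type u} [AddCommGroup C] [Module K C] [Coalgebra K C]
    (f : C →ₗ[K] H) (g : H →ₗ[K] H) (h : C →ₗ[K] H) : C ⊗[K] H →ₗ[K] H :=
  LinearMap.mul' K H ∘ₗ
    TensorProduct.map f
      (LinearMap.mul' K H ∘ₗ TensorProduct.map g h ∘ₗ (TensorProduct.comm K C H).toLinearMap) ∘ₗ
    (TensorProduct.assoc K C C H).toLinearMap ∘ₗ
    TensorProduct.map Coalgebra.comul LinearMap.id

/-- The descendent product: `mulB B (x ⊗ₜ y) = B x₁ * (y * (S (B x₂) * x₃))`,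
i.e. `x *_B y = B(x₁) y S(B(x₂)) x₃` in Sweedler notation. -/
def mulB (B : H →ₗ[K] H) : H ⊗[K] H →ₗ[K] H :=
  wrap B LinearMap.id (conv (aS K H ∘ₗ B) LinearMap.id)

/-- `Bt B x = x₁ * B (S x₂)`, i.e. the operator `B̃`. -/
def Bt (B : H →ₗ[K] H) : H →ₗ[K] H := conv LinearMap.id (B ∘ₗ aS K H)

/-- `SB B x = S(B x₁) * (S x₂ * B x₃)`, the antipode `S_B` of the descendent Hopf algebra. -/
def SB (B : H →ₗ[K] H) : H →ₗ[K] H := conv (aS K H ∘ₗ B) (conv (aS K H) B)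

/-- `H` is cocommutative. -/
def IsCocomm (K H : Type u) [Field K] [Ring H] [HopfAlgebra K H] : Prop :=
  ∀ x : H, (TensorProduct.comm K H H) (Coalgebra.comul x) = Coalgebra.comul x

/-- `B` is a Rota–Baxter operator of weight `-1` on `H`: it is a coalgebra map and
`B x * B y = B (B(x₁) y S(B(x₂)) x₃)` in Sweedler notation. -/
def IsRotaBaxter (B : H →ₗ[K] H) : Prop :=
  (Coalgebra.comul ∘ₗ B = TensorProduct.map B B ∘ₗ Coalgebra.comul) ∧
  (Coalgebra.counit ∘ₗ B = Coalgebra.counit) ∧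
  ∀ x y : H, B x * B y = B (mulB B (x ⊗ₜ[K] y))



section ConvCalc

variable {C A : Type u} [AddCommGroup C] [Module K C] [Coalgebra K C]
  [Ring A] [Algebra K A]


/-- auxiliary convolution product -/
def cnv (f g : C →ₗ[K] A) : C →ₗ[K] A :=
  LinearMap.mul' K A ∘ₗ TensorProduct.map f g ∘ₗ Coalgebra.comul

/-- auxiliary convolution unit -/
def cone : C →ₗ[K] A := Algebra.linearMap K A ∘ₗ Coalgebra.counit

lemma cnv_apply {ι : Type*} (f g : C →ₗ[K] A) (x : C) (r : Coalgebra.Repr K x ι) :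
    cnv f g x = ∑ i ∈ r.index, f (r.left i) * g (r.right i) := by
  simp only [cnv, comp_apply, ← r.eq, map_sum, TensorProduct.map_tmul, mul'_apply]

lemma cone_apply (x : C) : cone (K := K) (A := A) x
    = algebraMap K A (Coalgebra.counit x) := rfl

lemma cnv_assoc (f g h : C →ₗ[K] A) : cnv (cnv f g) h = cnv f (cnv g h) := by
  ext x
  set r := Coalgebra.Repr.arbitrary K x with hr
  set a1 : ∀ i, Coalgebra.Repr K (r.left i) (C × C) := fun i => Coalgebra.Repr.arbitrary K _ with ha1
  set a2 : ∀ i, Coalgebra.Repr K (r.right i) (C × C) := fun i => Coalgebra.Repr.arbitrary K _ with ha2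
  have key := Coalgebra.sum_map_tmul_tmul_eq (R := K) f g h x (repr := r) (a₁ := a1) (a₂ := a2)
  have key2 := congrArg (LinearMap.mul' K A ∘ₗ LinearMap.lTensor A (LinearMap.mul' K A)) key
  simp only [map_sum, comp_apply, lTensor_tmul, mul'_apply] at key2
  rw [cnv_apply _ _ x r, cnv_apply _ _ x r]
  calc ∑ i ∈ r.index, cnv f g (r.left i) * h (r.right i)
      = ∑ i ∈ r.index, ∑ j ∈ (a1 i).index,
          f ((a1 i).left j) * (g ((a1 i).right j) * h (r.right i)) := by
        refine Finset.sum_congr rfl fun i _ => ?_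
        rw [cnv_apply f g _ (a1 i), Finset.sum_mul]
        exact Finset.sum_congr rfl fun j _ => mul_assoc _ _ _
    _ = ∑ i ∈ r.index, ∑ j ∈ (a2 i).index,
          f (r.left i) * (g ((a2 i).left j) * h ((a2 i).right j)) := key2.symm
    _ = ∑ i ∈ r.index, f (r.left i) * cnv g h (r.right i) := by
        refine Finset.sum_congr rfl fun i _ => ?_
        rw [cnv_apply g h _ (a2 i), Finset.mul_sum]

lemma cnv_cone (f : C →ₗ[K] A) : cnv f cone = f := by
  ext x
  set r := Coalgebra.Repr.arbitrary K x with hr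
  have key := Coalgebra.sum_map_tmul_counit_eq (R := K) f x (repr := r)
  have key2 := congrArg (LinearMap.mul' K A ∘ₗ LinearMap.lTensor A (Algebra.linearMap K A)) key
  simp only [map_sum, comp_apply, lTensor_tmul, mul'_apply, map_one, mul_one] at key2
  rw [cnv_apply _ _ x r]
  simpa [cone_apply] using key2

lemma cone_cnv (f : C →ₗ[K] A) : cnv cone f = f := by
  ext x
  set r := Coalgebra.Repr.arbitrary K x with hr
  have key := Coalgebra.sum_counit_tmul_map_eq (R := K) f x (repr := r)
  have key2 := congrArg (LinearMap.mul' K A ∘ₗ LinearMap.rTensor A (Algebra.linearMap K A)) key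
  simp only [map_sum, comp_apply, rTensor_tmul, mul'_apply, map_one, one_mul] at key2
  rw [cnv_apply _ _ x r]
  simpa [cone_apply] using key2

lemma cnv_inv_unique {f g h : C →ₗ[K] A} (h1 : cnv h f = cone) (h2 : cnv f g = cone) :
    h = g := by
  have : cnv h (cnv f g) = cnv (cnv h f) g := (cnv_assoc h f g).symm
  rw [h1, h2, cnv_cone, cone_cnv] at this
  exact this

variable {C' : Type u} [AddCommGroup C'] [Module K C'] [Coalgebra K C']

lemma cnv_precomp (f g : C →ₗ[K] A) (φ : C' →ₗ[K] C)
    (hφ : Coalgebra.comul ∘ₗ φ = TensorProduct.map φ φ ∘ₗ Coalgebra.comul) :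
    cnv f g ∘ₗ φ = cnv (f ∘ₗ φ) (g ∘ₗ φ) := by
  unfold cnv
  rw [comp_assoc, comp_assoc, hφ, TensorProduct.map_comp]
  rfl

lemma cone_precomp (φ : C' →ₗ[K] C)
    (hφ : Coalgebra.counit ∘ₗ φ = Coalgebra.counit) :
    (cone (K := K) (A := A)) ∘ₗ φ = cone := by
  unfold cone
  rw [comp_assoc, hφ]

end ConvCalc

section Hopf


lemma cnv_aS_id : cnv (aS K H) LinearMap.id = cone := by
  have := HopfAlgebra.mul_antipode_rTensor_comul (R := K) (A := H)
  unfold cnv cone aS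
  rw [← this]; rfl

lemma cnv_id_aS : cnv LinearMap.id (aS K H) = cone := by
  have := HopfAlgebra.mul_antipode_lTensor_comul (R := K) (A := H)
  unfold cnv cone aS
  rw [← this]; rfl

/-- flip a repr using cocommutativity -/
def Coalgebra.Repr.flip {ι : Type*} (hcc : _root_.IsCocomm K H) {x : H} (r : Coalgebra.Repr K x ι) :
    Coalgebra.Repr K x ι where
  index := r.index
  left := r.right
  right := r.left
  eq := by
    have h := congrArg (TensorProduct.comm K H H) r.eq
    rw [map_sum] at h
    simpa [hcc x] using h

/-- tensor product repr -/
def Coalgebra.Repr.tmulRepr {ι κ : Type*} {x y : H} (rx : Coalgebra.Repr K x ι) (ry : Coalgebra.Repr K y κ) :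
    Coalgebra.Repr K (x ⊗ₜ[K] y) (ι × κ) where
  index := rx.index ×ˢ ry.index
  left p := rx.left p.1 ⊗ₜ[K] ry.left p.2
  right p := rx.right p.1 ⊗ₜ[K] ry.right p.2
  eq := by
    have : Coalgebra.comul (R := K) (x ⊗ₜ[K] y)
        = tensorTensorTensorComm K H H H H (Coalgebra.comul x ⊗ₜ Coalgebra.comul y) := rfl
    rw [this, ← rx.eq, ← ry.eq, TensorProduct.sum_tmul]
    simp only [TensorProduct.tmul_sum, map_sum, tensorTensorTensorComm_tmul]
    rw [Finset.sum_product]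

/-- multiplication repr -/
def Coalgebra.Repr.mulRepr {ι κ : Type*} {x y : H} (rx : Coalgebra.Repr K x ι) (ry : Coalgebra.Repr K y κ) :
    Coalgebra.Repr K (x * y) (ι × κ) where
  index := rx.index ×ˢ ry.index
  left p := rx.left p.1 * ry.left p.2
  right p := rx.right p.1 * ry.right p.2
  eq := by
    rw [Bialgebra.comul_mul, ← rx.eq, ← ry.eq, Finset.sum_mul_sum]
    rw [Finset.sum_product]
    simp only [Algebra.TensorProduct.tmul_mul_tmul]

lemma counit_tmul (x y : H) : Coalgebra.counit (R := K) (x ⊗ₜ[K] y)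
    = Coalgebra.counit x * Coalgebra.counit y := by simp [mul_comm]


lemma sum_mul_aS_eq {ι : Type*} {x : H} (r : Coalgebra.Repr K x ι) :
    ∑ i ∈ r.index, r.left i * aS K H (r.right i)
      = algebraMap K H (Coalgebra.counit x) :=
  HopfAlgebra.sum_mul_antipode_eq_algebraMap_counit r

lemma sum_aS_mul_eq {ι : Type*} {x : H} (r : Coalgebra.Repr K x ι) :
    ∑ i ∈ r.index, aS K H (r.left i) * r.right i
      = algebraMap K H (Coalgebra.counit x) :=
  HopfAlgebra.sum_antipode_mul_eq_algebraMap_counit r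

/-- antipode is anti-multiplicative -/
lemma aS_mul : aS K H ∘ₗ LinearMap.mul' K H
    = LinearMap.mul' K H ∘ₗ TensorProduct.map (aS K H) (aS K H)
        ∘ₗ (TensorProduct.comm K H H).toLinearMap := by
  refine cnv_inv_unique (f := LinearMap.mul' K H) ?_ ?_
  · apply TensorProduct.ext'
    intro x y
    set rx := Coalgebra.Repr.arbitrary K x
    set ry := Coalgebra.Repr.arbitrary K y
    rw [cnv_apply _ _ _ (rx.tmulRepr ry)]
    have : ∀ p ∈ (rx.tmulRepr ry).index,
        (aS K H ∘ₗ LinearMap.mul' K H) ((rx.tmulRepr ry).left p)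
          * LinearMap.mul' K H ((rx.tmulRepr ry).right p)
        = aS K H ((rx.mulRepr ry).left p) * ((rx.mulRepr ry).right p) := by
      intro p _
      simp [Coalgebra.Repr.tmulRepr, Coalgebra.Repr.mulRepr, mul'_apply]
    rw [Finset.sum_congr rfl this, cone_apply, _root_.counit_tmul,
      ← Bialgebra.counit_mul (R := K) x y]
    exact sum_aS_mul_eq (rx.mulRepr ry)
  · apply TensorProduct.ext'
    intro x y
    set rx := Coalgebra.Repr.arbitrary K x
    set ry := Coalgebra.Repr.arbitrary K y
    rw [cnv_apply _ _ _ (rx.tmulRepr ry)]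
    rw [cone_apply, _root_.counit_tmul]
    simp only [Coalgebra.Repr.tmulRepr, Finset.sum_product, comp_apply,
      LinearEquiv.coe_coe, TensorProduct.comm_tmul, TensorProduct.map_tmul, mul'_apply]
    calc ∑ i ∈ rx.index, ∑ j ∈ ry.index,
          (rx.left i * ry.left j) * (aS K H (ry.right j) * aS K H (rx.right i))
        = ∑ i ∈ rx.index, rx.left i *
            ((∑ j ∈ ry.index, ry.left j * aS K H (ry.right j)) * aS K H (rx.right i)) := by
          refine Finset.sum_congr rfl fun i _ => ?_
          rw [Finset.sum_mul, Finset.mul_sum]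
          exact Finset.sum_congr rfl fun j _ => by simp only [mul_assoc]
      _ = ∑ i ∈ rx.index, rx.left i *
            (algebraMap K H (Coalgebra.counit y) * aS K H (rx.right i)) := by
          rw [sum_mul_aS_eq ry]
      _ = Coalgebra.counit (R := K) y • ∑ i ∈ rx.index, rx.left i * aS K H (rx.right i) := by
          rw [Finset.smul_sum]
          refine Finset.sum_congr rfl fun i _ => ?_
          rw [← Algebra.smul_def, mul_smul_comm]
      _ = algebraMap K H (Coalgebra.counit x * Coalgebra.counit y) := by
          rw [sum_mul_aS_eq rx, Algebra.smul_def, ← map_mul,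
            mul_comm (Coalgebra.counit (R := K) y) _]


lemma aS_mul_apply (a b : H) : aS K H (a * b) = aS K H b * aS K H a := by
  have := LinearMap.congr_fun (aS_mul (K := K) (H := H)) (a ⊗ₜ[K] b)
  simpa [mul'_apply] using this

lemma aS_one : aS K H (1 : H) = 1 := by
  simp [aS]

lemma aS_algebraMap (k : K) : aS K H (algebraMap K H k) = algebraMap K H k := by
  rw [Algebra.algebraMap_eq_smul_one, map_smul, aS_one]

lemma comm_map (f g : H →ₗ[K] H) :
    (TensorProduct.comm K H H).toLinearMap ∘ₗ TensorProduct.map f g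
      = TensorProduct.map g f ∘ₗ (TensorProduct.comm K H H).toLinearMap := by
  apply TensorProduct.ext'; intro x y; simp

lemma comm_comul (hcc : IsCocomm K H) :
    (TensorProduct.comm K H H).toLinearMap ∘ₗ (Coalgebra.comul : H →ₗ[K] H ⊗[K] H)
      = Coalgebra.comul := by
  ext x; exact hcc x

/-- key collapsing computation for the anti-comultiplicativity of the antipode -/
lemma key_collapse (a y : H) :
    (LinearMap.mul' K (H ⊗[K] H) ∘ₗ
      LinearMap.lTensor (H ⊗[K] H)
        ((TensorProduct.comm K H H).toLinearMap ∘ₗ TensorProduct.map (aS K H) (aS K H)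
          ∘ₗ Coalgebra.comul))
      ((TensorProduct.assoc K H H H).symm (a ⊗ₜ[K] Coalgebra.comul y))
    = (a * aS K H y) ⊗ₜ[K] (1 : H) := by
  set G0 : H ⊗[K] H →ₗ[K] H ⊗[K] H :=
    (TensorProduct.comm K H H).toLinearMap ∘ₗ TensorProduct.map (aS K H) (aS K H) with hG0
  set L : H ⊗[K] (H ⊗[K] H) →ₗ[K] H ⊗[K] H :=
    LinearMap.mul' K (H ⊗[K] H) ∘ₗ TensorProduct.map (TensorProduct.mk K H H a) G0 with hL
  set ry := Coalgebra.Repr.arbitrary K y with hry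
  set rl : ∀ j, Coalgebra.Repr K (ry.left j) (H × H) := fun j => Coalgebra.Repr.arbitrary K _ with hrl
  have step1 : (LinearMap.mul' K (H ⊗[K] H) ∘ₗ
      LinearMap.lTensor (H ⊗[K] H)
        ((TensorProduct.comm K H H).toLinearMap ∘ₗ TensorProduct.map (aS K H) (aS K H)
          ∘ₗ Coalgebra.comul))
      ((TensorProduct.assoc K H H H).symm (a ⊗ₜ[K] Coalgebra.comul y))
      = L ((Coalgebra.comul (R := K) (A := H)).lTensor H (Coalgebra.comul y)) := by
    rw [← ry.eq]
    simp only [TensorProduct.tmul_sum, map_sum, TensorProduct.assoc_symm_tmul,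
      comp_apply, lTensor_tmul, TensorProduct.map_tmul, mul'_apply, TensorProduct.mk_apply, hL,
      hG0]
  rw [step1, ← Coalgebra.coassoc_apply y]
  have expand : (Coalgebra.comul (R := K) (A := H)).rTensor H (Coalgebra.comul y)
      = ∑ j ∈ ry.index, ∑ k ∈ (rl j).index,
          ((rl j).left k ⊗ₜ[K] (rl j).right k) ⊗ₜ[K] ry.right j := by
    rw [← ry.eq, map_sum]
    refine Finset.sum_congr rfl fun j _ => ?_
    rw [rTensor_tmul, ← (rl j).eq, TensorProduct.sum_tmul]
  rw [expand]
  simp only [map_sum, TensorProduct.assoc_tmul, hL, comp_apply, TensorProduct.map_tmul,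
    TensorProduct.mk_apply, hG0, LinearEquiv.coe_coe, TensorProduct.comm_tmul, mul'_apply,
    Algebra.TensorProduct.tmul_mul_tmul]
  -- goal : ∑ j ∑ k (a * aS (ry.right j)) ⊗ ((rl j).left k * aS ((rl j).right k)) = (a * aS y) ⊗ 1
  have hy : ∑ j ∈ ry.index, Coalgebra.counit (R := K) (ry.left j) • ry.right j = y := by
    have h0 := congrArg (TensorProduct.lid K H) (Coalgebra.sum_counit_tmul_eq (R := K) ry)
    rw [map_sum] at h0
    simpa using h0
  calc ∑ j ∈ ry.index, ∑ k ∈ (rl j).index,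
        (a * aS K H (ry.right j)) ⊗ₜ[K] ((rl j).left k * aS K H ((rl j).right k))
      = ∑ j ∈ ry.index,
          (a * aS K H (ry.right j)) ⊗ₜ[K] (algebraMap K H (Coalgebra.counit (ry.left j))) := by
        refine Finset.sum_congr rfl fun j _ => ?_
        rw [← TensorProduct.tmul_sum, sum_mul_aS_eq (rl j)]
    _ = ∑ j ∈ ry.index,
          (a * aS K H (Coalgebra.counit (R := K) (ry.left j) • ry.right j)) ⊗ₜ[K] (1 : H) := by
        refine Finset.sum_congr rfl fun j _ => ?_
        rw [Algebra.algebraMap_eq_smul_one, TensorProduct.tmul_smul, map_smul, mul_smul_comm,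
          ← TensorProduct.smul_tmul']
    _ = (a * aS K H (∑ j ∈ ry.index, Coalgebra.counit (R := K) (ry.left j) • ry.right j))
          ⊗ₜ[K] (1 : H) := by
        rw [map_sum, Finset.mul_sum, ← TensorProduct.sum_tmul]
    _ = (a * aS K H y) ⊗ₜ[K] (1 : H) := by rw [hy]

/-- antipode is anti-comultiplicative (general form) -/
lemma comul_aS' : Coalgebra.comul ∘ₗ aS K H
    = (TensorProduct.comm K H H).toLinearMap ∘ₗ TensorProduct.map (aS K H) (aS K H)
        ∘ₗ Coalgebra.comul := by
  refine cnv_inv_unique (f := (Coalgebra.comul : H →ₗ[K] H ⊗[K] H)) ?_ ?_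
  · ext x
    set r := Coalgebra.Repr.arbitrary K x with hr
    rw [cnv_apply _ _ x r]
    have : ∀ i ∈ r.index,
        (Coalgebra.comul ∘ₗ aS K H) (r.left i) * Coalgebra.comul (r.right i)
        = Coalgebra.comul (R := K) (aS K H (r.left i) * r.right i) := by
      intro i _
      rw [comp_apply, Bialgebra.comul_mul]
    rw [Finset.sum_congr rfl this, ← map_sum, sum_aS_mul_eq r, cone_apply,
      Bialgebra.comul_algebraMap]
  · ext x
    set r := Coalgebra.Repr.arbitrary K x with hr
    rw [cnv_apply _ _ x r]
    set G : H →ₗ[K] H ⊗[K] H :=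
      (TensorProduct.comm K H H).toLinearMap ∘ₗ TensorProduct.map (aS K H) (aS K H)
        ∘ₗ Coalgebra.comul with hG
    set Phi : (H ⊗[K] H) ⊗[K] H →ₗ[K] H ⊗[K] H :=
      LinearMap.mul' K (H ⊗[K] H) ∘ₗ LinearMap.lTensor (H ⊗[K] H) G with hPhi
    have stepA : ∑ i ∈ r.index, Coalgebra.comul (r.left i) * G (r.right i)
        = Phi ((Coalgebra.comul (R := K) (A := H)).rTensor H (Coalgebra.comul x)) := by
      rw [← r.eq, map_sum, map_sum]
      exact Finset.sum_congr rfl fun i _ => by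
        simp [hPhi, hG, mul'_apply]
    rw [stepA, ← Coalgebra.coassoc_symm_apply x, ← r.eq]
    simp only [map_sum, lTensor_tmul]
    have : ∀ i ∈ r.index,
        Phi ((TensorProduct.assoc K H H H).symm (r.left i ⊗ₜ[K] Coalgebra.comul (r.right i)))
        = (r.left i * aS K H (r.right i)) ⊗ₜ[K] (1 : H) :=
      fun i _ => key_collapse (r.left i) (r.right i)
    rw [Finset.sum_congr rfl this, ← TensorProduct.sum_tmul, sum_mul_aS_eq r, cone_apply]
    simp [Algebra.TensorProduct.algebraMap_apply]

/-- antipode is anti-comultiplicative, cocommutative form -/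
lemma comul_aS (hcc : IsCocomm K H) : Coalgebra.comul ∘ₗ aS K H
    = TensorProduct.map (aS K H) (aS K H) ∘ₗ Coalgebra.comul := by
  rw [comul_aS', ← comp_assoc, comm_map, comp_assoc, comm_comul hcc]

/-- antipode is involutive in the cocommutative case -/
lemma aS_aS (hcc : IsCocomm K H) : aS K H ∘ₗ aS K H = LinearMap.id := by
  refine cnv_inv_unique (f := aS K H) ?_ cnv_aS_id
  ext x
  set r := Coalgebra.Repr.arbitrary K x with hr
  rw [cnv_apply _ _ x r]
  have : ∀ i ∈ r.index, (aS K H ∘ₗ aS K H) (r.left i) * aS K H (r.right i)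
      = aS K H (r.right i * aS K H (r.left i)) := by
    intro i _
    rw [comp_apply, aS_mul_apply]
  rw [Finset.sum_congr rfl this, ← map_sum,
    show ∑ i ∈ r.index, r.right i * aS K H (r.left i) = algebraMap K H (Coalgebra.counit x)
      from sum_mul_aS_eq (r.flip hcc),
    aS_algebraMap, cone_apply]

lemma aS_cnv (hcc : IsCocomm K H) (f g : H →ₗ[K] H) :
    aS K H ∘ₗ cnv f g = cnv (aS K H ∘ₗ g) (aS K H ∘ₗ f) := by
  calc aS K H ∘ₗ cnv f g
      = (aS K H ∘ₗ LinearMap.mul' K H) ∘ₗ (TensorProduct.map f g ∘ₗ Coalgebra.comul) := rfl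
    _ = (LinearMap.mul' K H ∘ₗ TensorProduct.map (aS K H) (aS K H)
          ∘ₗ (TensorProduct.comm K H H).toLinearMap)
          ∘ₗ (TensorProduct.map f g ∘ₗ Coalgebra.comul) := by rw [aS_mul]
    _ = LinearMap.mul' K H ∘ₗ TensorProduct.map (aS K H) (aS K H)
          ∘ₗ ((TensorProduct.comm K H H).toLinearMap ∘ₗ TensorProduct.map f g)
          ∘ₗ Coalgebra.comul := rfl
    _ = LinearMap.mul' K H ∘ₗ TensorProduct.map (aS K H) (aS K H)
          ∘ₗ (TensorProduct.map g f ∘ₗ (TensorProduct.comm K H H).toLinearMap)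
          ∘ₗ Coalgebra.comul := by rw [comm_map]
    _ = LinearMap.mul' K H ∘ₗ (TensorProduct.map (aS K H) (aS K H) ∘ₗ TensorProduct.map g f)
          ∘ₗ ((TensorProduct.comm K H H).toLinearMap ∘ₗ Coalgebra.comul) := rfl
    _ = LinearMap.mul' K H ∘ₗ (TensorProduct.map (aS K H) (aS K H) ∘ₗ TensorProduct.map g f)
          ∘ₗ Coalgebra.comul := by rw [comm_comul hcc]
    _ = cnv (aS K H ∘ₗ g) (aS K H ∘ₗ f) := by
        rw [show TensorProduct.map (aS K H) (aS K H) ∘ₗ TensorProduct.map g f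
            = TensorProduct.map (aS K H ∘ₗ g) (aS K H ∘ₗ f)
            from (TensorProduct.map_comp _ _ _ _).symm]
        rfl

end Hopf


section RB

variable (B : H →ₗ[K] H)

lemma conv_eq_cnv (f g : H →ₗ[K] H) : conv f g = cnv f g := rfl

lemma RBmap (hB : IsRotaBaxter B) :
    LinearMap.mul' K H ∘ₗ TensorProduct.map B B = B ∘ₗ mulB B := by
  apply TensorProduct.ext'; intro x y
  simpa [mul'_apply] using hB.2.2 x y

lemma cnv_B_SB (hB : IsRotaBaxter B) : cnv B (aS K H ∘ₗ B) = cone := by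
  have h1 : TensorProduct.map B (aS K H ∘ₗ B)
      = LinearMap.lTensor H (aS K H) ∘ₗ TensorProduct.map B B := by
    apply TensorProduct.ext'; intro x y; simp
  have key : LinearMap.mul' K H ∘ₗ LinearMap.lTensor H (aS K H)
      ∘ₗ (TensorProduct.map B B ∘ₗ Coalgebra.comul) = cone := by
    rw [← hB.1]
    rw [show LinearMap.mul' K H ∘ₗ LinearMap.lTensor H (aS K H) ∘ₗ (Coalgebra.comul ∘ₗ B)
        = (LinearMap.mul' K H ∘ₗ (HopfAlgebra.antipode (R := K)).lTensor H ∘ₗ Coalgebra.comul) ∘ₗ B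
        from rfl,
      HopfAlgebra.mul_antipode_lTensor_comul,
      show (Algebra.linearMap K H ∘ₗ Coalgebra.counit) ∘ₗ B
        = Algebra.linearMap K H ∘ₗ (Coalgebra.counit ∘ₗ B) from rfl,
      hB.2.1]
    rfl
  calc cnv B (aS K H ∘ₗ B)
      = LinearMap.mul' K H ∘ₗ LinearMap.lTensor H (aS K H)
          ∘ₗ (TensorProduct.map B B ∘ₗ Coalgebra.comul) := by
        show LinearMap.mul' K H ∘ₗ TensorProduct.map B (aS K H ∘ₗ B) ∘ₗ Coalgebra.comul = _
        rw [h1]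
        rfl
    _ = cone := key

lemma cnv_SB_B (hB : IsRotaBaxter B) : cnv (aS K H ∘ₗ B) B = cone := by
  have h1 : TensorProduct.map (aS K H ∘ₗ B) B
      = LinearMap.rTensor H (aS K H) ∘ₗ TensorProduct.map B B := by
    apply TensorProduct.ext'; intro x y; simp
  have key : LinearMap.mul' K H ∘ₗ LinearMap.rTensor H (aS K H)
      ∘ₗ (TensorProduct.map B B ∘ₗ Coalgebra.comul) = cone := by
    rw [← hB.1]
    rw [show LinearMap.mul' K H ∘ₗ LinearMap.rTensor H (aS K H) ∘ₗ (Coalgebra.comul ∘ₗ B)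
        = (LinearMap.mul' K H ∘ₗ (HopfAlgebra.antipode (R := K)).rTensor H ∘ₗ Coalgebra.comul) ∘ₗ B
        from rfl,
      HopfAlgebra.mul_antipode_rTensor_comul,
      show (Algebra.linearMap K H ∘ₗ Coalgebra.counit) ∘ₗ B
        = Algebra.linearMap K H ∘ₗ (Coalgebra.counit ∘ₗ B) from rfl,
      hB.2.1]
    rfl
  calc cnv (aS K H ∘ₗ B) B
      = LinearMap.mul' K H ∘ₗ LinearMap.rTensor H (aS K H)
          ∘ₗ (TensorProduct.map B B ∘ₗ Coalgebra.comul) := by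
        show LinearMap.mul' K H ∘ₗ TensorProduct.map (aS K H ∘ₗ B) B ∘ₗ Coalgebra.comul = _
        rw [h1]
        rfl
    _ = cone := key

lemma step1 (hcc : IsCocomm K H) (u : H →ₗ[K] H) :
    mulB B ∘ₗ LinearMap.lTensor H u ∘ₗ Coalgebra.comul
      = cnv B (cnv u (cnv (aS K H ∘ₗ B) LinearMap.id)) := by
  set ι : H →ₗ[K] H := cnv (aS K H ∘ₗ B) LinearMap.id with hι
  set W : H ⊗[K] H →ₗ[K] H :=
    LinearMap.mul' K H ∘ₗ TensorProduct.map LinearMap.id ι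
      ∘ₗ (TensorProduct.comm K H H).toLinearMap with hW
  set assocT : (H ⊗[K] H) ⊗[K] H →ₗ[K] H ⊗[K] (H ⊗[K] H) :=
    (TensorProduct.assoc K H H H).toLinearMap with hassocT
  have nat1' : ∀ (t : (H ⊗[K] H)) (y : H),
      assocT (t ⊗ₜ[K] u y)
        = LinearMap.lTensor H (LinearMap.lTensor H u) (assocT (t ⊗ₜ[K] y)) := by
    intro t y
    induction t with
    | zero => simp
    | tmul a b => simp [hassocT]
    | add s t hs ht =>
        simp only [TensorProduct.add_tmul, map_add, hs, ht]
  have nat1 : assocT ∘ₗ TensorProduct.map Coalgebra.comul u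
      = LinearMap.lTensor H (LinearMap.lTensor H u) ∘ₗ assocT
          ∘ₗ TensorProduct.map Coalgebra.comul LinearMap.id := by
    apply TensorProduct.ext'; intro x y
    simp only [comp_apply, TensorProduct.map_tmul, id_coe, id_eq]
    exact nat1' _ y
  have mΔu : TensorProduct.map (Coalgebra.comul (R := K) (A := H)) LinearMap.id
      ∘ₗ LinearMap.lTensor H u = TensorProduct.map Coalgebra.comul u := by
    apply TensorProduct.ext'; intro x y; simp
  have w1 : W ∘ₗ LinearMap.lTensor H u
      = LinearMap.mul' K H ∘ₗ TensorProduct.map u ι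
          ∘ₗ (TensorProduct.comm K H H).toLinearMap := by
    apply TensorProduct.ext'; intro x y; simp [hW, mul'_apply]
  have keyW : W ∘ₗ LinearMap.lTensor H u ∘ₗ Coalgebra.comul = cnv u ι := by
    rw [show W ∘ₗ LinearMap.lTensor H u ∘ₗ Coalgebra.comul
        = (W ∘ₗ LinearMap.lTensor H u) ∘ₗ Coalgebra.comul from rfl, w1,
      show (LinearMap.mul' K H ∘ₗ TensorProduct.map u ι
          ∘ₗ (TensorProduct.comm K H H).toLinearMap) ∘ₗ Coalgebra.comul
        = LinearMap.mul' K H ∘ₗ TensorProduct.map u ι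
          ∘ₗ ((TensorProduct.comm K H H).toLinearMap ∘ₗ Coalgebra.comul) from rfl,
      comm_comul hcc]
    rfl
  calc mulB B ∘ₗ LinearMap.lTensor H u ∘ₗ Coalgebra.comul
      = LinearMap.mul' K H ∘ₗ TensorProduct.map B W ∘ₗ assocT
          ∘ₗ (TensorProduct.map Coalgebra.comul LinearMap.id ∘ₗ LinearMap.lTensor H u)
          ∘ₗ Coalgebra.comul := rfl
    _ = LinearMap.mul' K H ∘ₗ TensorProduct.map B W
          ∘ₗ (assocT ∘ₗ TensorProduct.map Coalgebra.comul u) ∘ₗ Coalgebra.comul := by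
        rw [mΔu]
        rfl
    _ = LinearMap.mul' K H ∘ₗ TensorProduct.map B W
          ∘ₗ (LinearMap.lTensor H (LinearMap.lTensor H u) ∘ₗ assocT
            ∘ₗ TensorProduct.map Coalgebra.comul LinearMap.id) ∘ₗ Coalgebra.comul := by
        rw [nat1]
    _ = LinearMap.mul' K H ∘ₗ TensorProduct.map B W
          ∘ₗ LinearMap.lTensor H (LinearMap.lTensor H u)
          ∘ₗ ((Coalgebra.comul (R := K) (A := H)).lTensor H ∘ₗ Coalgebra.comul) := by
        have coas : assocT ∘ₗ TensorProduct.map (Coalgebra.comul (R := K) (A := H)) LinearMap.id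
            ∘ₗ Coalgebra.comul
          = LinearMap.lTensor H (Coalgebra.comul (R := K) (A := H)) ∘ₗ Coalgebra.comul :=
          Coalgebra.coassoc
        rw [show LinearMap.mul' K H ∘ₗ TensorProduct.map B W
            ∘ₗ (LinearMap.lTensor H (LinearMap.lTensor H u) ∘ₗ assocT
              ∘ₗ TensorProduct.map Coalgebra.comul LinearMap.id) ∘ₗ Coalgebra.comul
          = LinearMap.mul' K H ∘ₗ TensorProduct.map B W
            ∘ₗ LinearMap.lTensor H (LinearMap.lTensor H u)
            ∘ₗ (assocT ∘ₗ TensorProduct.map (Coalgebra.comul (R := K) (A := H)) LinearMap.id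
              ∘ₗ Coalgebra.comul) from rfl, coas]
    _ = LinearMap.mul' K H
          ∘ₗ TensorProduct.map B (W ∘ₗ LinearMap.lTensor H u ∘ₗ Coalgebra.comul)
          ∘ₗ Coalgebra.comul := by
        rw [show TensorProduct.map B (W ∘ₗ LinearMap.lTensor H u ∘ₗ Coalgebra.comul)
            = TensorProduct.map B W ∘ₗ LinearMap.lTensor H (LinearMap.lTensor H u)
              ∘ₗ LinearMap.lTensor H (Coalgebra.comul (R := K) (A := H)) from by
          apply TensorProduct.ext'; intro x y; simp]
        rfl
    _ = cnv B (cnv u ι) := by rw [keyW]; rfl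

lemma lemmaM (hcc : IsCocomm K H) (hB : IsRotaBaxter B) (u : H →ₗ[K] H) :
    cnv B (B ∘ₗ u)
      = B ∘ₗ cnv B (cnv u (cnv (aS K H ∘ₗ B) LinearMap.id)) := by
  have m0 : TensorProduct.map B (B ∘ₗ u)
      = TensorProduct.map B B ∘ₗ LinearMap.lTensor H u := by
    apply TensorProduct.ext'; intro x y; simp
  calc cnv B (B ∘ₗ u)
      = (LinearMap.mul' K H ∘ₗ TensorProduct.map B B)
          ∘ₗ (LinearMap.lTensor H u ∘ₗ Coalgebra.comul) := by
        show LinearMap.mul' K H ∘ₗ TensorProduct.map B (B ∘ₗ u) ∘ₗ Coalgebra.comul = _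
        rw [m0]
        rfl
    _ = (B ∘ₗ mulB B) ∘ₗ (LinearMap.lTensor H u ∘ₗ Coalgebra.comul) := by rw [RBmap B hB]
    _ = B ∘ₗ (mulB B ∘ₗ LinearMap.lTensor H u ∘ₗ Coalgebra.comul) := rfl
    _ = B ∘ₗ cnv B (cnv u (cnv (aS K H ∘ₗ B) LinearMap.id)) := by rw [step1 B hcc u]

lemma L1 (hcc : IsCocomm K H) (hB : IsRotaBaxter B) :
    Bt B ∘ₗ B = B ∘ₗ cnv (aS K H ∘ₗ B) LinearMap.id := by
  have h1 : Bt B ∘ₗ B = cnv B (B ∘ₗ (aS K H ∘ₗ B)) := by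
    show cnv LinearMap.id (B ∘ₗ aS K H) ∘ₗ B = _
    rw [cnv_precomp _ _ B hB.1]
    rfl
  rw [h1, lemmaM B hcc hB (aS K H ∘ₗ B), ← cnv_assoc, cnv_B_SB B hB, cone_cnv]

lemma R1 (hcc : IsCocomm K H) (hB : IsRotaBaxter B) :
    B ∘ₗ aS K H ∘ₗ Bt B ∘ₗ aS K H = B ∘ₗ cnv (aS K H ∘ₗ B) LinearMap.id := by
  have bt_s : Bt B ∘ₗ aS K H = cnv (aS K H) B := by
    show cnv LinearMap.id (B ∘ₗ aS K H) ∘ₗ aS K H = _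
    rw [cnv_precomp _ _ _ (comul_aS hcc), id_comp,
      show (B ∘ₗ aS K H) ∘ₗ aS K H = B ∘ₗ (aS K H ∘ₗ aS K H) from rfl, aS_aS hcc, comp_id]
  have s_bt : aS K H ∘ₗ cnv (aS K H) B = cnv (aS K H ∘ₗ B) LinearMap.id := by
    rw [aS_cnv hcc, aS_aS hcc]
  calc B ∘ₗ aS K H ∘ₗ Bt B ∘ₗ aS K H
      = B ∘ₗ (aS K H ∘ₗ (Bt B ∘ₗ aS K H)) := rfl
    _ = B ∘ₗ (aS K H ∘ₗ cnv (aS K H) B) := by rw [bt_s]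
    _ = B ∘ₗ cnv (aS K H ∘ₗ B) LinearMap.id := by rw [s_bt]

lemma hBX (hcc : IsCocomm K H) (hB : IsRotaBaxter B) :
    cnv B (B ∘ₗ cnv (aS K H) B) = B ∘ₗ B := by
  have inner : cnv B (cnv (aS K H ∘ₗ B) LinearMap.id) = LinearMap.id := by
    rw [← cnv_assoc, cnv_B_SB B hB, cone_cnv]
  rw [lemmaM B hcc hB (cnv (aS K H) B), cnv_assoc, inner, cnv_aS_id, cnv_cone]

lemma hXY (hcc : IsCocomm K H) (hB : IsRotaBaxter B) :
    B ∘ₗ cnv (aS K H) B = cnv (aS K H ∘ₗ B) (B ∘ₗ B) := by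
  calc B ∘ₗ cnv (aS K H) B = cnv cone (B ∘ₗ cnv (aS K H) B) := (cone_cnv _).symm
    _ = cnv (cnv (aS K H ∘ₗ B) B) (B ∘ₗ cnv (aS K H) B) := by rw [cnv_SB_B B hB]
    _ = cnv (aS K H ∘ₗ B) (cnv B (B ∘ₗ cnv (aS K H) B)) := cnv_assoc _ _ _
    _ = cnv (aS K H ∘ₗ B) (B ∘ₗ B) := by rw [hBX B hcc hB]

lemma L2 (hcc : IsCocomm K H) (hB : IsRotaBaxter B) :
    B ∘ₗ Bt B = (B ∘ₗ cnv (aS K H) B) ∘ₗ aS K H := by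
  have : cnv (aS K H) B ∘ₗ aS K H = Bt B := by
    rw [cnv_precomp _ _ _ (comul_aS hcc), aS_aS hcc]
    rfl
  rw [show (B ∘ₗ cnv (aS K H) B) ∘ₗ aS K H = B ∘ₗ (cnv (aS K H) B ∘ₗ aS K H) from rfl, this]

lemma R2 (hcc : IsCocomm K H) (hB : IsRotaBaxter B) :
    Bt B ∘ₗ (aS K H ∘ₗ B ∘ₗ aS K H) = (B ∘ₗ cnv (aS K H) B) ∘ₗ aS K H := by
  have hφ : Coalgebra.comul ∘ₗ (aS K H ∘ₗ B ∘ₗ aS K H)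
      = TensorProduct.map (aS K H ∘ₗ B ∘ₗ aS K H) (aS K H ∘ₗ B ∘ₗ aS K H)
          ∘ₗ Coalgebra.comul := by
    rw [show Coalgebra.comul ∘ₗ (aS K H ∘ₗ B ∘ₗ aS K H)
        = (Coalgebra.comul ∘ₗ aS K H) ∘ₗ (B ∘ₗ aS K H) from rfl, comul_aS hcc,
      show (TensorProduct.map (aS K H) (aS K H) ∘ₗ Coalgebra.comul) ∘ₗ (B ∘ₗ aS K H)
        = TensorProduct.map (aS K H) (aS K H) ∘ₗ ((Coalgebra.comul ∘ₗ B) ∘ₗ aS K H) from rfl,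
      hB.1,
      show TensorProduct.map (aS K H) (aS K H)
          ∘ₗ ((TensorProduct.map B B ∘ₗ Coalgebra.comul) ∘ₗ aS K H)
        = TensorProduct.map (aS K H) (aS K H) ∘ₗ TensorProduct.map B B
          ∘ₗ (Coalgebra.comul ∘ₗ aS K H) from rfl,
      comul_aS hcc,
      show TensorProduct.map (aS K H) (aS K H) ∘ₗ TensorProduct.map B B
          ∘ₗ TensorProduct.map (aS K H) (aS K H) ∘ₗ Coalgebra.comul
        = (TensorProduct.map (aS K H) (aS K H) ∘ₗ TensorProduct.map B B
            ∘ₗ TensorProduct.map (aS K H) (aS K H)) ∘ₗ Coalgebra.comul from rfl,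
      show TensorProduct.map (aS K H) (aS K H) ∘ₗ TensorProduct.map B B
            ∘ₗ TensorProduct.map (aS K H) (aS K H)
        = TensorProduct.map (aS K H ∘ₗ B ∘ₗ aS K H) (aS K H ∘ₗ B ∘ₗ aS K H) from by
        apply TensorProduct.ext'; intro x y; simp]
  have lhs : Bt B ∘ₗ (aS K H ∘ₗ B ∘ₗ aS K H)
      = cnv (aS K H ∘ₗ B ∘ₗ aS K H) (B ∘ₗ B ∘ₗ aS K H) := by
    show cnv LinearMap.id (B ∘ₗ aS K H) ∘ₗ (aS K H ∘ₗ B ∘ₗ aS K H) = _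
    rw [cnv_precomp _ _ _ hφ, id_comp,
      show (B ∘ₗ aS K H) ∘ₗ (aS K H ∘ₗ B ∘ₗ aS K H)
        = B ∘ₗ ((aS K H ∘ₗ aS K H) ∘ₗ (B ∘ₗ aS K H)) from rfl, aS_aS hcc, id_comp]
  have rhs : (B ∘ₗ cnv (aS K H) B) ∘ₗ aS K H
      = cnv (aS K H ∘ₗ B ∘ₗ aS K H) (B ∘ₗ B ∘ₗ aS K H) := by
    rw [show (B ∘ₗ cnv (aS K H) B) ∘ₗ aS K H
        = (cnv (aS K H ∘ₗ B) (B ∘ₗ B)) ∘ₗ aS K H from by rw [← hXY B hcc hB],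
      cnv_precomp _ _ _ (comul_aS hcc)]
    rfl
  rw [lhs, rhs]

end RB

/-- `B̃(B(x)) = B(S(B̃(S(x))))` and `B(B̃(x)) = B̃(S(B(S(x))))`. -/
theorem stmt5 (B : H →ₗ[K] H) (hcc : IsCocomm K H) (hB : IsRotaBaxter B) :
    ∀ x : H, Bt B (B x) = B (aS K H (Bt B (aS K H x))) ∧ B (Bt B x) = Bt B (aS K H (B (aS K H x))) := by
  intro x
  constructor
  · have h := (L1 B hcc hB).trans (R1 B hcc hB).symm
    exact LinearMap.congr_fun h x
  · have h := (L2 B hcc hB).trans (R2 B hcc hB).symm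
    exact LinearMap.congr_fun h x

end
end

section
/- Let (H, B) be a Rota–Baxter Hopf algebra of weight −1, define B̃ : H → H by B̃(x) = x₁ B(S(x₂)), and set x *_B y = B(x₁) y S(B(x₂)) x₃ and x *_{B̃} y = B̃(x₁) y S(B̃(x₂)) x₃. Then for all x, y ∈ H one has S(S(x) *_{B̃} S(y)) = x *_B y. -/
open TensorProduct LinearMap

noncomputable section

universe u

variable {K H : Type u} [Field K] [CharZero K] [Ring H] [HopfAlgebra K H]

namespace RBAux

open Coalgebra

section Gen
variable {R : Type u} [Field R]
variable {C : Type u} [AddCommGroup C] [Module R C] [Coalgebra R C]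
variable {D : Type u} [AddCommGroup D] [Module R D] [Coalgebra R D]
variable {A : Type u} [Ring A] [Algebra R A]
variable {A' : Type u} [Ring A'] [Algebra R A']


/-- Convolution product. -/
def cv (f g : C →ₗ[R] A) : C →ₗ[R] A :=
  LinearMap.mul' R A ∘ₗ TensorProduct.map f g ∘ₗ Coalgebra.comul

/-- Convolution unit. -/
def ce : C →ₗ[R] A := Algebra.linearMap R A ∘ₗ Coalgebra.counit

lemma cv_assoc (f g h : C →ₗ[R] A) : cv (cv f g) h = cv f (cv g h) := by
  have ha : TensorProduct.map (cv f g) h =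
      TensorProduct.map (LinearMap.mul' R A ∘ₗ TensorProduct.map f g) h
        ∘ₗ TensorProduct.map comul LinearMap.id := by
    apply TensorProduct.ext'; intro x y; simp [cv]
  have hb : TensorProduct.map f (cv g h) =
      TensorProduct.map f (LinearMap.mul' R A ∘ₗ TensorProduct.map g h)
        ∘ₗ TensorProduct.map LinearMap.id comul := by
    apply TensorProduct.ext'; intro x y; simp [cv]
  have hc : LinearMap.mul' R A ∘ₗ
        TensorProduct.map (LinearMap.mul' R A ∘ₗ TensorProduct.map f g) h =
      (LinearMap.mul' R A ∘ₗ
          TensorProduct.map f (LinearMap.mul' R A ∘ₗ TensorProduct.map g h))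
        ∘ₗ (TensorProduct.assoc R C C C).toLinearMap := by
    apply TensorProduct.ext_threefold; intro x y z
    simp [mul'_apply, mul_assoc]
  have hd : ∀ x : C,
      (TensorProduct.map LinearMap.id comul) (comul x) =
        (TensorProduct.assoc R C C C) ((TensorProduct.map comul LinearMap.id) (comul x)) := by
    intro x
    exact (Coalgebra.coassoc_apply x).symm
  ext x
  show (LinearMap.mul' R A) ((TensorProduct.map (cv f g) h) (comul x)) =
    (LinearMap.mul' R A) ((TensorProduct.map f (cv g h)) (comul x))
  rw [ha, hb]
  simp only [comp_apply]
  rw [hd x]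
  exact congr_fun (congrArg DFunLike.coe hc) _
  
lemma cv_ce_left (f : C →ₗ[R] A) : cv ce f = f := by
  ext x
  have h1 : TensorProduct.map (ce : C →ₗ[R] A) f =
      TensorProduct.map (Algebra.linearMap R A) f
        ∘ₗ TensorProduct.map (counit : C →ₗ[R] R) LinearMap.id := by
    apply TensorProduct.ext'; intro x y; simp [ce]
  simp only [cv, comp_apply]
  rw [h1]
  simp only [comp_apply]
  have h2 : (TensorProduct.map (counit : C →ₗ[R] R) LinearMap.id) (comul x) = 1 ⊗ₜ[R] x :=
    Coalgebra.rTensor_counit_comul x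
  rw [h2]
  simp [mul'_apply]

lemma cv_ce_right (f : C →ₗ[R] A) : cv f ce = f := by
  ext x
  have h1 : TensorProduct.map f (ce : C →ₗ[R] A) =
      TensorProduct.map f (Algebra.linearMap R A)
        ∘ₗ TensorProduct.map LinearMap.id (counit : C →ₗ[R] R) := by
    apply TensorProduct.ext'; intro x y; simp [ce]
  simp only [cv, comp_apply]
  rw [h1]
  simp only [comp_apply]
  have h2 : (TensorProduct.map LinearMap.id (counit : C →ₗ[R] R)) (comul x) = x ⊗ₜ[R] 1 :=
    Coalgebra.lTensor_counit_comul x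
  rw [h2]
  simp [mul'_apply]

lemma cv_comp (φ : D →ₗ[R] C)
    (hφ : comul ∘ₗ φ = TensorProduct.map φ φ ∘ₗ comul) (f g : C →ₗ[R] A) :
    (cv f g) ∘ₗ φ = cv (f ∘ₗ φ) (g ∘ₗ φ) := by
  ext x
  simp only [cv, comp_apply]
  have h1 : comul (φ x) = TensorProduct.map φ φ (comul x) :=
    congr_fun (congrArg DFunLike.coe hφ) x
  rw [h1]
  congr 1
  rw [← comp_apply, ← TensorProduct.map_comp]

lemma ce_comp (φ : D →ₗ[R] C) (hφε : (counit : C →ₗ[R] R) ∘ₗ φ = counit) :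
    (ce : C →ₗ[R] A) ∘ₗ φ = ce := by
  ext x
  simp only [ce, comp_apply]
  rw [← comp_apply (counit : C →ₗ[R] R) φ, hφε]

lemma cv_post (α : A →ₗ[R] A')
    (hα : α ∘ₗ LinearMap.mul' R A = LinearMap.mul' R A' ∘ₗ TensorProduct.map α α)
    (f g : C →ₗ[R] A) :
    α ∘ₗ cv f g = cv (α ∘ₗ f) (α ∘ₗ g) := by
  ext x
  simp only [cv, comp_apply]
  rw [← comp_apply α, hα]
  simp only [comp_apply]
  congr 1
  rw [← comp_apply, ← TensorProduct.map_comp]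

lemma ce_post (α : A →ₗ[R] A')
    (hα1 : α ∘ₗ Algebra.linearMap R A = Algebra.linearMap R A') :
    α ∘ₗ (ce : C →ₗ[R] A) = ce := by
  ext x
  simp only [ce, comp_apply]
  rw [← comp_apply α, hα1]




/-- Counit contraction on the right factor. -/
def piL : C ⊗[R] D →ₗ[R] C :=
  (TensorProduct.rid R C).toLinearMap ∘ₗ LinearMap.lTensor C (Coalgebra.counit : D →ₗ[R] R)

/-- Counit contraction on the left factor. -/
def piR : C ⊗[R] D →ₗ[R] D :=
  (TensorProduct.lid R D).toLinearMap ∘ₗ LinearMap.rTensor D (Coalgebra.counit : C →ₗ[R] R)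

@[simp] lemma piL_tmul (x : C) (y : D) : (piL (R := R)) (x ⊗ₜ[R] y) = (counit (R := R) y) • x := by
  simp [piL]

@[simp] lemma piR_tmul (x : C) (y : D) : (piR (R := R)) (x ⊗ₜ[R] y) = (counit (R := R) x) • y := by
  simp [piR]

@[simp] lemma counitT_tmul (x : C) (y : D) :
    (Coalgebra.counit : C ⊗[R] D →ₗ[R] R) (x ⊗ₜ[R] y) = counit x * counit y := by
  show counit (R := R) y • counit (R := R) x = _
  simp [mul'_apply, mul_comm]

variable {C' D' : Type u} [AddCommGroup C'] [Module R C'] [Coalgebra R C']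
  [AddCommGroup D'] [Module R D'] [Coalgebra R D']

lemma piL_nat (u : C →ₗ[R] C') (v : D →ₗ[R] D')
    (hv : (counit : D' →ₗ[R] R) ∘ₗ v = counit) :
    piL ∘ₗ TensorProduct.map u v = u ∘ₗ piL := by
  apply TensorProduct.ext'; intro x y
  have : (counit : D' →ₗ[R] R) (v y) = counit y := congr_fun (congrArg DFunLike.coe hv) y
  simp [this]

lemma piR_nat (u : C →ₗ[R] C') (v : D →ₗ[R] D')
    (hu : (counit : C' →ₗ[R] R) ∘ₗ u = counit) :
    piR ∘ₗ TensorProduct.map u v = v ∘ₗ piR := by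
  apply TensorProduct.ext'; intro x y
  have : (counit : C' →ₗ[R] R) (u x) = counit x := congr_fun (congrArg DFunLike.coe hu) x
  simp [this]

lemma piL_comul : (piL : C ⊗[R] C →ₗ[R] C) ∘ₗ comul = LinearMap.id := by
  ext x
  simp only [comp_apply, piL, LinearMap.coe_comp, LinearEquiv.coe_coe, Function.comp_apply,
    id_coe, id_eq]
  rw [Coalgebra.lTensor_counit_comul (R := R) x]
  simp

lemma piR_comul : (piR : C ⊗[R] C →ₗ[R] C) ∘ₗ comul = LinearMap.id := by
  ext x
  simp only [comp_apply, piR, LinearMap.coe_comp, LinearEquiv.coe_coe, Function.comp_apply,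
    id_coe, id_eq]
  rw [Coalgebra.rTensor_counit_comul (R := R) x]
  simp

lemma counit_piL : (counit : C →ₗ[R] R) ∘ₗ piL = (counit : C ⊗[R] D →ₗ[R] R) := by
  apply TensorProduct.ext'; intro x y
  simp [mul_comm]

lemma counit_piR : (counit : D →ₗ[R] R) ∘ₗ piR = (counit : C ⊗[R] D →ₗ[R] R) := by
  apply TensorProduct.ext'; intro x y
  simp [mul_comm]

lemma counitT_comul : (counit : C ⊗[R] C →ₗ[R] R) ∘ₗ (comul : C →ₗ[R] C ⊗[R] C)
    = counit := by
  rw [← counit_piL (R := R) (C := C) (D := C), LinearMap.comp_assoc, piL_comul, comp_id]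

/-- comm naturality. -/
lemma comm_map {M N M' N' : Type u} [AddCommGroup M] [Module R M] [AddCommGroup N] [Module R N]
    [AddCommGroup M'] [Module R M'] [AddCommGroup N'] [Module R N']
    (u : M →ₗ[R] M') (v : N →ₗ[R] N') :
    (TensorProduct.comm R M' N').toLinearMap ∘ₗ TensorProduct.map u v
      = TensorProduct.map v u ∘ₗ (TensorProduct.comm R M N).toLinearMap := by
  apply TensorProduct.ext'; intro x y; simp

/-- ttc abbreviation. -/
def ttc : (C ⊗[R] C) ⊗[R] (D ⊗[R] D) →ₗ[R] (C ⊗[R] D) ⊗[R] (C ⊗[R] D) :=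
  (TensorProduct.tensorTensorTensorComm R C C D D).toLinearMap

lemma comulT_eq : (comul : C ⊗[R] D →ₗ[R] (C ⊗[R] D) ⊗[R] (C ⊗[R] D))
    = ttc ∘ₗ TensorProduct.map comul comul := rfl

set_option maxRecDepth 8000 in
lemma B1 : TensorProduct.map (piL : C ⊗[R] D →ₗ[R] C) piL ∘ₗ (ttc (R := R))
    = (piL : (C ⊗[R] C) ⊗[R] (D ⊗[R] D) →ₗ[R] C ⊗[R] C) := by
  apply TensorProduct.ext_fourfold'; intro a b c d
  simp only [ttc, LinearMap.coe_comp, LinearEquiv.coe_coe, Function.comp_apply,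
    tensorTensorTensorComm_tmul, TensorProduct.map_tmul, piL_tmul, counitT_tmul]
  rw [tmul_smul, ← smul_tmul', smul_smul, mul_comm]

set_option maxRecDepth 8000 in
lemma B1R : TensorProduct.map (piR : C ⊗[R] D →ₗ[R] D) piR ∘ₗ (ttc (R := R))
    = (piR : (C ⊗[R] C) ⊗[R] (D ⊗[R] D) →ₗ[R] D ⊗[R] D) := by
  apply TensorProduct.ext_fourfold'; intro a b c d
  simp only [ttc, LinearMap.coe_comp, LinearEquiv.coe_coe, Function.comp_apply,
    tensorTensorTensorComm_tmul, TensorProduct.map_tmul, piR_tmul, counitT_tmul]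
  rw [tmul_smul, ← smul_tmul', smul_smul, mul_comm]

lemma piL_coalg : (comul : C →ₗ[R] C ⊗[R] C) ∘ₗ (piL : C ⊗[R] D →ₗ[R] C)
    = TensorProduct.map piL piL ∘ₗ (comul : C ⊗[R] D →ₗ[R] _) := by
  rw [comulT_eq, ← LinearMap.comp_assoc, B1,
    piL_nat (comul : C →ₗ[R] C ⊗[R] C) (comul : D →ₗ[R] D ⊗[R] D) counitT_comul]

lemma piR_coalg : (comul : D →ₗ[R] D ⊗[R] D) ∘ₗ (piR : C ⊗[R] D →ₗ[R] D)
    = TensorProduct.map piR piR ∘ₗ (comul : C ⊗[R] D →ₗ[R] _) := by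
  rw [comulT_eq, ← LinearMap.comp_assoc, B1R,
    piR_nat (comul : C →ₗ[R] C ⊗[R] C) (comul : D →ₗ[R] D ⊗[R] D) counitT_comul]


end Gen

section Hopf

-- In this section `K`, `H` are the outer Hopf-algebra variables.

lemma axL : cv (aS K H) LinearMap.id = (ce : H →ₗ[K] H) :=
  HopfAlgebra.mul_antipode_rTensor_comul

lemma axR : cv LinearMap.id (aS K H) = (ce : H →ₗ[K] H) :=
  HopfAlgebra.mul_antipode_lTensor_comul

lemma counit_mul_map : (Coalgebra.counit : H →ₗ[K] K) ∘ₗ LinearMap.mul' K H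
    = LinearMap.mul' K K ∘ₗ TensorProduct.map Coalgebra.counit Coalgebra.counit := by
  apply TensorProduct.ext'; intro x y; simp [mul'_apply]

lemma ce_K : (ce : H →ₗ[K] K) = Coalgebra.counit := by
  ext x; simp [ce]

lemma ce_counit_post : (Coalgebra.counit : H →ₗ[K] K) ∘ₗ Algebra.linearMap K H
    = Algebra.linearMap K K := by
  apply LinearMap.ext_ring; simp

lemma counitS : (Coalgebra.counit : H →ₗ[K] K) ∘ₗ aS K H = Coalgebra.counit := by
  have h1 : (Coalgebra.counit : H →ₗ[K] K) ∘ₗ cv (aS K H) LinearMap.id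
      = cv ((Coalgebra.counit : H →ₗ[K] K) ∘ₗ aS K H)
          ((Coalgebra.counit : H →ₗ[K] K) ∘ₗ LinearMap.id) :=
    cv_post Coalgebra.counit counit_mul_map _ _
  rw [axL, comp_id, ce_post (Coalgebra.counit : H →ₗ[K] K) ce_counit_post, ce_K] at h1
  have h2 : cv ((Coalgebra.counit : H →ₗ[K] K) ∘ₗ aS K H) (ce : H →ₗ[K] K)
      = (Coalgebra.counit : H →ₗ[K] K) ∘ₗ aS K H := cv_ce_right _
  rw [ce_K] at h2
  rw [← h2, ← h1]

lemma antipode_one_map : aS K H ∘ₗ Algebra.linearMap K H = Algebra.linearMap K H := by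
  apply LinearMap.ext_ring
  have h := HopfAlgebra.mul_antipode_rTensor_comul_apply (R := K) (1 : H)
  simp only [Bialgebra.comul_one] at h
  rw [Algebra.TensorProduct.one_def] at h
  simp only [rTensor_tmul, mul'_apply, mul_one, Bialgebra.counit_one, map_one] at h
  simpa [aS] using h

lemma S_ce {C : Type u} [AddCommGroup C] [Module K C] [Coalgebra K C] :
    aS K H ∘ₗ (ce : C →ₗ[K] H) = ce :=
  ce_post _ antipode_one_map

lemma comul_mult : (Coalgebra.comul : H →ₗ[K] H ⊗[K] H) ∘ₗ LinearMap.mul' K H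
    = LinearMap.mul' K (H ⊗[K] H) ∘ₗ TensorProduct.map Coalgebra.comul Coalgebra.comul := by
  apply TensorProduct.ext'; intro x y; simp [mul'_apply]

lemma counit_multT : (Coalgebra.counit : H →ₗ[K] K) ∘ₗ LinearMap.mul' K H
    = (Coalgebra.counit : H ⊗[K] H →ₗ[K] K) := by
  apply TensorProduct.ext'; intro x y; simp [mul'_apply, mul_comm]

lemma comul_unit_map : (Coalgebra.comul : H →ₗ[K] H ⊗[K] H) ∘ₗ Algebra.linearMap K H
    = Algebra.linearMap K (H ⊗[K] H) := by
  apply LinearMap.ext_ring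
  simp only [comp_apply, Algebra.linearMap_apply, map_one, Bialgebra.comul_one]

lemma A4 : TensorProduct.map (LinearMap.mul' K H) (LinearMap.mul' K H) ∘ₗ (ttc (R := K))
    = LinearMap.mul' K (H ⊗[K] H) := by
  apply TensorProduct.ext_fourfold'; intro a b c d
  simp [ttc, mul'_apply, Algebra.TensorProduct.tmul_mul_tmul]

lemma mul_coalg : (Coalgebra.comul : H →ₗ[K] H ⊗[K] H) ∘ₗ
      LinearMap.mul' K H
    = TensorProduct.map (LinearMap.mul' K H) (LinearMap.mul' K H)
        ∘ₗ (Coalgebra.comul : H ⊗[K] H →ₗ[K] (H ⊗[K] H) ⊗[K] (H ⊗[K] H)) := by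
  apply TensorProduct.ext'; intro x y
  have hA := congr_fun (congrArg DFunLike.coe (A4 (H := H)))
    ((Coalgebra.comul x : H ⊗[K] H) ⊗ₜ[K] (Coalgebra.comul y : H ⊗[K] H))
  simp only [comp_apply, mul'_apply] at hA ⊢
  rw [Bialgebra.comul_mul]
  show _ = (TensorProduct.map (LinearMap.mul' K H) (LinearMap.mul' K H))
    ((ttc (R := K)) ((Coalgebra.comul x : H ⊗[K] H) ⊗ₜ[K] (Coalgebra.comul y : H ⊗[K] H)))
  rw [hA]

lemma smulmul (k l : K) (u v : H) : (k • u) * (l • v) = (k * l) • (u * v) := by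
  rw [smul_mul_assoc, mul_smul_comm, smul_smul]

lemma X1 (f g : H →ₗ[K] H) :
    LinearMap.mul' K H ∘ₗ TensorProduct.map (f ∘ₗ piL) (g ∘ₗ piR) ∘ₗ (ttc (R := K))
      = LinearMap.mul' K H ∘ₗ TensorProduct.map f g ∘ₗ TensorProduct.map piL piR := by
  apply TensorProduct.ext_fourfold'; intro a b c d
  simp only [comp_apply, LinearEquiv.coe_coe, ttc, tensorTensorTensorComm_tmul,
    TensorProduct.map_tmul, piL_tmul, piR_tmul, map_smul, mul'_apply]
  rw [smulmul, smulmul, mul_comm]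

lemma comulT_pt (x y : H) :
    (Coalgebra.comul (R := K) (x ⊗ₜ[K] y) : (H ⊗[K] H) ⊗[K] (H ⊗[K] H))
      = (ttc (R := K)) ((Coalgebra.comul x : H ⊗[K] H) ⊗ₜ[K] (Coalgebra.comul y : H ⊗[K] H)) := by
  rw [comulT_eq]
  simp only [comp_apply, TensorProduct.map_tmul]

lemma piL_comul_pt (x : H) : (piL : H ⊗[K] H →ₗ[K] H) (Coalgebra.comul x) = x := by
  have := congr_fun (congrArg DFunLike.coe (piL_comul (R := K) (C := H))) x
  simpa using this

lemma piR_comul_pt (x : H) : (piR : H ⊗[K] H →ₗ[K] H) (Coalgebra.comul x) = x := by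
  have := congr_fun (congrArg DFunLike.coe (piR_comul (R := K) (C := H))) x
  simpa using this

lemma P (f g : H →ₗ[K] H) :
    cv (f ∘ₗ piL) (g ∘ₗ piR) = LinearMap.mul' K H ∘ₗ TensorProduct.map f g := by
  apply TensorProduct.ext'; intro x y
  have hX := congr_fun (congrArg DFunLike.coe (X1 f g))
    ((Coalgebra.comul x : H ⊗[K] H) ⊗ₜ[K] (Coalgebra.comul y : H ⊗[K] H))
  simp only [comp_apply, LinearEquiv.coe_coe] at hX
  simp only [cv, comp_apply]
  rw [comulT_pt, hX]
  simp only [TensorProduct.map_tmul, piL_comul_pt, piR_comul_pt]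

lemma pq : cv (piL : H ⊗[K] H →ₗ[K] H) piR = LinearMap.mul' K H := by
  have h := P (LinearMap.id : H →ₗ[K] H) LinearMap.id
  rw [id_comp, id_comp, TensorProduct.map_id, comp_id] at h
  exact h

lemma X2 (g f : H →ₗ[K] H) :
    LinearMap.mul' K H ∘ₗ TensorProduct.map (g ∘ₗ piR) (f ∘ₗ piL) ∘ₗ (ttc (R := K))
      = LinearMap.mul' K H ∘ₗ TensorProduct.map g f ∘ₗ TensorProduct.map piL piR
          ∘ₗ (TensorProduct.comm K (H ⊗[K] H) (H ⊗[K] H)).toLinearMap := by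
  apply TensorProduct.ext_fourfold'; intro a b c d
  simp only [comp_apply, LinearEquiv.coe_coe, ttc, tensorTensorTensorComm_tmul,
    TensorProduct.map_tmul, piL_tmul, piR_tmul, map_smul, mul'_apply, comm_tmul]
  rw [smulmul, smulmul, mul_comm]

lemma P' (g f : H →ₗ[K] H) :
    cv (g ∘ₗ piR) (f ∘ₗ piL)
      = LinearMap.mul' K H ∘ₗ TensorProduct.map g f ∘ₗ (TensorProduct.comm K H H).toLinearMap := by
  apply TensorProduct.ext'; intro x y
  have hX := congr_fun (congrArg DFunLike.coe (X2 g f))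
    ((Coalgebra.comul x : H ⊗[K] H) ⊗ₜ[K] (Coalgebra.comul y : H ⊗[K] H))
  simp only [comp_apply, LinearEquiv.coe_coe] at hX
  simp only [cv, comp_apply, LinearEquiv.coe_coe]
  rw [comulT_pt, hX]
  simp only [comm_tmul, TensorProduct.map_tmul, piL_comul_pt, piR_comul_pt]

lemma minv2 : cv (aS K H ∘ₗ LinearMap.mul' K H) (LinearMap.mul' K H)
    = (ce : H ⊗[K] H →ₗ[K] H) := by
  calc cv (aS K H ∘ₗ LinearMap.mul' K H) (LinearMap.mul' K H)
      = cv (aS K H ∘ₗ LinearMap.mul' K H) (LinearMap.id ∘ₗ LinearMap.mul' K H) := by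
        rw [id_comp]
    _ = (cv (aS K H) LinearMap.id) ∘ₗ LinearMap.mul' K H :=
        (cv_comp (LinearMap.mul' K H) mul_coalg _ _).symm
    _ = ce ∘ₗ LinearMap.mul' K H := by rw [axL]
    _ = ce := ce_comp _ counit_multT


lemma piL_coalgH : (Coalgebra.comul : H →ₗ[K] H ⊗[K] H) ∘ₗ (piL : H ⊗[K] H →ₗ[K] H)
    = TensorProduct.map piL piL
        ∘ₗ (Coalgebra.comul : H ⊗[K] H →ₗ[K] (H ⊗[K] H) ⊗[K] (H ⊗[K] H)) :=
  piL_coalg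

lemma piR_coalgH : (Coalgebra.comul : H →ₗ[K] H ⊗[K] H) ∘ₗ (piR : H ⊗[K] H →ₗ[K] H)
    = TensorProduct.map piR piR
        ∘ₗ (Coalgebra.comul : H ⊗[K] H →ₗ[K] (H ⊗[K] H) ⊗[K] (H ⊗[K] H)) :=
  piR_coalg

lemma eL : cv (piL : H ⊗[K] H →ₗ[K] H) (aS K H ∘ₗ piL) = ce := by
  have h := cv_comp (R := K) (C := H) (D := H ⊗[K] H) (A := H) piL piL_coalgH
    LinearMap.id (aS K H)
  rw [axR, id_comp] at h
  rw [← h]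
  exact ce_comp _ counit_piL

lemma eR : cv (piR : H ⊗[K] H →ₗ[K] H) (aS K H ∘ₗ piR) = ce := by
  have h := cv_comp (R := K) (C := H) (D := H ⊗[K] H) (A := H) piR piR_coalgH
    LinearMap.id (aS K H)
  rw [axR, id_comp] at h
  rw [← h]
  exact ce_comp _ counit_piR

set_option maxHeartbeats 1000000 in
lemma mg : cv (LinearMap.mul' K H) (cv (aS K H ∘ₗ piR) (aS K H ∘ₗ piL))
    = (ce : H ⊗[K] H →ₗ[K] H) := by
  rw [← pq, cv_assoc, ← cv_assoc (piR : H ⊗[K] H →ₗ[K] H), eR, cv_ce_left, eL]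

set_option maxHeartbeats 1000000 in
lemma antihomv : aS K H ∘ₗ LinearMap.mul' K H = cv (aS K H ∘ₗ piR) (aS K H ∘ₗ piL) := by
  calc aS K H ∘ₗ LinearMap.mul' K H
      = cv (aS K H ∘ₗ LinearMap.mul' K H) ce := (cv_ce_right _).symm
    _ = cv (aS K H ∘ₗ LinearMap.mul' K H)
          (cv (LinearMap.mul' K H) (cv (aS K H ∘ₗ piR) (aS K H ∘ₗ piL))) := by rw [mg]
    _ = cv (cv (aS K H ∘ₗ LinearMap.mul' K H) (LinearMap.mul' K H))
          (cv (aS K H ∘ₗ piR) (aS K H ∘ₗ piL)) := (cv_assoc _ _ _).symm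
    _ = cv ce (cv (aS K H ∘ₗ piR) (aS K H ∘ₗ piL)) := by rw [minv2]
    _ = cv (aS K H ∘ₗ piR) (aS K H ∘ₗ piL) := cv_ce_left _

lemma antihom : aS K H ∘ₗ LinearMap.mul' K H
    = LinearMap.mul' K H ∘ₗ TensorProduct.map (aS K H) (aS K H)
        ∘ₗ (TensorProduct.comm K H H).toLinearMap :=
  antihomv.trans (P' (aS K H) (aS K H))

/-- inclusion `x ↦ x ⊗ 1`. -/
def i1 : H →ₗ[K] H ⊗[K] H :=
  (Algebra.TensorProduct.includeLeft (R := K) (S := K) (A := H) (B := H)).toLinearMap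

/-- inclusion `x ↦ 1 ⊗ x`. -/
def i2 : H →ₗ[K] H ⊗[K] H :=
  (Algebra.TensorProduct.includeRight (R := K) (A := H) (B := H)).toLinearMap

@[simp] lemma i1_apply (x : H) : i1 (K := K) x = x ⊗ₜ[K] 1 := rfl
@[simp] lemma i2_apply (x : H) : i2 (K := K) x = 1 ⊗ₜ[K] x := rfl

lemma Y1 : LinearMap.mul' K (H ⊗[K] H) ∘ₗ TensorProduct.map (i1 (K := K)) i2
    = LinearMap.id := by
  apply TensorProduct.ext'; intro x y
  simp [mul'_apply, Algebra.TensorProduct.tmul_mul_tmul]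

lemma Y2 : LinearMap.mul' K (H ⊗[K] H) ∘ₗ TensorProduct.map (i2 (K := K)) i1
    = LinearMap.mul' K (H ⊗[K] H) ∘ₗ TensorProduct.map (i1 (K := K)) i2
        ∘ₗ (TensorProduct.comm K H H).toLinearMap := by
  apply TensorProduct.ext'; intro x y
  simp [mul'_apply, Algebra.TensorProduct.tmul_mul_tmul]

lemma hi1mul : (i1 (K := K)) ∘ₗ LinearMap.mul' K H
    = LinearMap.mul' K (H ⊗[K] H) ∘ₗ TensorProduct.map i1 i1 := by
  apply TensorProduct.ext'; intro x y
  simp [mul'_apply, Algebra.TensorProduct.tmul_mul_tmul]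

lemma hi2mul : (i2 (K := K)) ∘ₗ LinearMap.mul' K H
    = LinearMap.mul' K (H ⊗[K] H) ∘ₗ TensorProduct.map i2 i2 := by
  apply TensorProduct.ext'; intro x y
  simp [mul'_apply, Algebra.TensorProduct.tmul_mul_tmul]

lemma hi1unit : (i1 (K := K)) ∘ₗ Algebra.linearMap K H = Algebra.linearMap K (H ⊗[K] H) := by
  apply LinearMap.ext_ring
  simp [Algebra.TensorProduct.one_def]

lemma hi2unit : (i2 (K := K)) ∘ₗ Algebra.linearMap K H = Algebra.linearMap K (H ⊗[K] H) := by
  apply LinearMap.ext_ring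
  simp [Algebra.TensorProduct.one_def]

lemma d1 : cv (i1 (K := K)) i2 = (Coalgebra.comul : H →ₗ[K] H ⊗[K] H) := by
  show LinearMap.mul' K (H ⊗[K] H) ∘ₗ TensorProduct.map (i1 (K := K)) i2 ∘ₗ Coalgebra.comul = _
  rw [← LinearMap.comp_assoc, Y1, id_comp]

lemma DSr : cv ((Coalgebra.comul : H →ₗ[K] H ⊗[K] H) ∘ₗ aS K H) Coalgebra.comul
    = (ce : H →ₗ[K] H ⊗[K] H) := by
  have h := cv_post (R := K) (C := H) (A := H) (A' := H ⊗[K] H)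
    Coalgebra.comul comul_mult (aS K H) LinearMap.id
  rw [axL, comp_id] at h
  rw [← h]
  exact ce_post _ comul_unit_map

lemma i1ce : cv (i1 (K := K)) ((i1 (K := K)) ∘ₗ aS K H) = (ce : H →ₗ[K] H ⊗[K] H) := by
  have h := cv_post (R := K) (C := H) (A := H) (A' := H ⊗[K] H)
    (i1 (K := K)) hi1mul LinearMap.id (aS K H)
  rw [axR, comp_id] at h
  rw [← h]
  exact ce_post _ hi1unit

lemma i2ce : cv (i2 (K := K)) ((i2 (K := K)) ∘ₗ aS K H) = (ce : H →ₗ[K] H ⊗[K] H) := by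
  have h := cv_post (R := K) (C := H) (A := H) (A' := H ⊗[K] H)
    (i2 (K := K)) hi2mul LinearMap.id (aS K H)
  rw [axR, comp_id] at h
  rw [← h]
  exact ce_post _ hi2unit

lemma rinvD : cv (Coalgebra.comul : H →ₗ[K] H ⊗[K] H)
    (cv ((i2 (K := K)) ∘ₗ aS K H) ((i1 (K := K)) ∘ₗ aS K H)) = ce := by
  rw [← d1, cv_assoc, ← cv_assoc (i2 (K := K) (H := H)), i2ce, cv_ce_left, i1ce]

lemma comulS0 : (Coalgebra.comul : H →ₗ[K] H ⊗[K] H) ∘ₗ aS K H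
    = cv ((i2 (K := K)) ∘ₗ aS K H) ((i1 (K := K)) ∘ₗ aS K H) := by
  have h1 : (Coalgebra.comul : H →ₗ[K] H ⊗[K] H) ∘ₗ aS K H
      = cv ((Coalgebra.comul : H →ₗ[K] H ⊗[K] H) ∘ₗ aS K H) ce := (cv_ce_right _).symm
  rw [h1, ← rinvD, ← cv_assoc, DSr, cv_ce_left]

lemma comulS (hcc : _root_.IsCocomm K H) : (Coalgebra.comul : H →ₗ[K] H ⊗[K] H) ∘ₗ aS K H
    = TensorProduct.map (aS K H) (aS K H) ∘ₗ Coalgebra.comul := by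
  ext x
  have h1 := congr_fun (congrArg DFunLike.coe (comulS0 (K := K) (H := H))) x
  simp only [cv, comp_apply] at h1 ⊢
  rw [h1]
  have h2 := congr_fun (congrArg DFunLike.coe
    (TensorProduct.map_comp (i2 (K := K)) (i1 (K := K)) (aS K H) (aS K H)))
    (Coalgebra.comul x)
  simp only [comp_apply] at h2
  rw [h2]
  have h3 := congr_fun (congrArg DFunLike.coe (Y2 (H := H)))
    ((TensorProduct.map (aS K H) (aS K H)) (Coalgebra.comul x))
  simp only [comp_apply, LinearEquiv.coe_coe] at h3
  rw [h3]
  have h4 := congr_fun (congrArg DFunLike.coe (comm_map (R := K) (aS K H) (aS K H)))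
    (Coalgebra.comul x)
  simp only [comp_apply, LinearEquiv.coe_coe] at h4
  rw [h4, hcc x]
  have h5 := congr_fun (congrArg DFunLike.coe (Y1 (H := H)))
    ((TensorProduct.map (aS K H) (aS K H)) (Coalgebra.comul x))
  simp only [comp_apply, id_coe, id_eq] at h5
  rw [h5]

lemma hccmap (hcc : _root_.IsCocomm K H) :
    (TensorProduct.comm K H H).toLinearMap ∘ₗ (Coalgebra.comul : H →ₗ[K] H ⊗[K] H)
      = Coalgebra.comul := by
  ext x; simpa using hcc x

lemma S_cv {C : Type u} [AddCommGroup C] [Module K C] [Coalgebra K C]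
    (hC : (TensorProduct.comm K C C).toLinearMap ∘ₗ (Coalgebra.comul : C →ₗ[K] C ⊗[K] C)
      = Coalgebra.comul)
    (f g : C →ₗ[K] H) : aS K H ∘ₗ cv f g = cv (aS K H ∘ₗ g) (aS K H ∘ₗ f) := by
  ext x
  simp only [cv, comp_apply]
  have h1 := congr_fun (congrArg DFunLike.coe (antihom (H := H)))
    ((TensorProduct.map f g) (Coalgebra.comul x))
  simp only [comp_apply, LinearEquiv.coe_coe] at h1
  rw [h1]
  have h2 := congr_fun (congrArg DFunLike.coe (comm_map (R := K) f g)) (Coalgebra.comul x)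
  simp only [comp_apply, LinearEquiv.coe_coe] at h2
  rw [h2]
  have h3 : (TensorProduct.comm K C C) (Coalgebra.comul x) = Coalgebra.comul x := by
    have := congr_fun (congrArg DFunLike.coe hC) x; simpa using this
  rw [h3]
  congr 1
  rw [← comp_apply, ← TensorProduct.map_comp]

lemma SS (hcc : _root_.IsCocomm K H) : aS K H ∘ₗ aS K H = LinearMap.id := by
  have h1 : cv (aS K H ∘ₗ aS K H) (aS K H) = (ce : H →ₗ[K] H) := by
    have h := S_cv (hccmap hcc) LinearMap.id (aS K H)
    rw [axR, comp_id, S_ce] at h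
    exact h.symm
  have h2 : aS K H ∘ₗ aS K H = cv (aS K H ∘ₗ aS K H) ce := (cv_ce_right _).symm
  rw [h2, ← axL, ← cv_assoc, h1, cv_ce_left]

lemma A6 : (ttc (R := K)) ∘ₗ TensorProduct.map
      (TensorProduct.map (aS K H) (aS K H)) (TensorProduct.map (aS K H) (aS K H))
    = TensorProduct.map
        (TensorProduct.map (aS K H) (aS K H)) (TensorProduct.map (aS K H) (aS K H))
      ∘ₗ (ttc (R := K)) := by
  apply TensorProduct.ext_fourfold'; intro a b c d
  simp [ttc]

lemma A7 : (TensorProduct.comm K (H ⊗[K] H) (H ⊗[K] H)).toLinearMap ∘ₗ (ttc (R := K))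
    = (ttc (R := K)) ∘ₗ TensorProduct.map
        (TensorProduct.comm K H H).toLinearMap (TensorProduct.comm K H H).toLinearMap := by
  apply TensorProduct.ext_fourfold'; intro a b c d
  simp [ttc]

lemma ccT (hcc : _root_.IsCocomm K H) :
    (TensorProduct.comm K (H ⊗[K] H) (H ⊗[K] H)).toLinearMap
        ∘ₗ (Coalgebra.comul : H ⊗[K] H →ₗ[K] (H ⊗[K] H) ⊗[K] (H ⊗[K] H))
      = Coalgebra.comul := by
  apply TensorProduct.ext'; intro x y
  simp only [comp_apply, LinearEquiv.coe_coe]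
  rw [comulT_pt]
  have h := congr_fun (congrArg DFunLike.coe (A7 (H := H)))
    ((Coalgebra.comul x : H ⊗[K] H) ⊗ₜ[K] (Coalgebra.comul y : H ⊗[K] H))
  simp only [comp_apply, LinearEquiv.coe_coe] at h
  rw [h, TensorProduct.map_tmul]
  have hx : (TensorProduct.comm K H H) (Coalgebra.comul x) = Coalgebra.comul x := hcc x
  have hy : (TensorProduct.comm K H H) (Coalgebra.comul y) = Coalgebra.comul y := hcc y
  simp only [LinearEquiv.coe_coe, hx, hy]

lemma mapSS_coalg (hcc : _root_.IsCocomm K H) :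
    (Coalgebra.comul : H ⊗[K] H →ₗ[K] (H ⊗[K] H) ⊗[K] (H ⊗[K] H))
        ∘ₗ TensorProduct.map (aS K H) (aS K H)
      = TensorProduct.map
            (TensorProduct.map (aS K H) (aS K H)) (TensorProduct.map (aS K H) (aS K H))
          ∘ₗ Coalgebra.comul := by
  apply TensorProduct.ext'; intro x y
  simp only [comp_apply, TensorProduct.map_tmul]
  rw [comulT_pt, comulT_pt]
  have hSx := congr_fun (congrArg DFunLike.coe (comulS hcc)) x
  have hSy := congr_fun (congrArg DFunLike.coe (comulS hcc)) y
  simp only [comp_apply] at hSx hSy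
  rw [hSx, hSy]
  have h := congr_fun (congrArg DFunLike.coe (A6 (H := H)))
    ((Coalgebra.comul x : H ⊗[K] H) ⊗ₜ[K] (Coalgebra.comul y : H ⊗[K] H))
  simp only [comp_apply, TensorProduct.map_tmul] at h
  exact h

lemma X3 (f g h : H →ₗ[K] H) :
    LinearMap.mul' K H ∘ₗ TensorProduct.map (f ∘ₗ piL)
        (LinearMap.mul' K H ∘ₗ TensorProduct.map g h ∘ₗ (TensorProduct.comm K H H).toLinearMap)
      ∘ₗ (ttc (R := K))
    = LinearMap.mul' K H ∘ₗ TensorProduct.map f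
        (LinearMap.mul' K H ∘ₗ TensorProduct.map g h ∘ₗ (TensorProduct.comm K H H).toLinearMap)
      ∘ₗ (TensorProduct.assoc K H H H).toLinearMap
      ∘ₗ TensorProduct.map LinearMap.id (piR : H ⊗[K] H →ₗ[K] H) := by
  apply TensorProduct.ext_fourfold'; intro a b c d
  simp only [comp_apply, LinearEquiv.coe_coe, ttc, tensorTensorTensorComm_tmul,
    TensorProduct.map_tmul, piL_tmul, piR_tmul, map_smul, mul'_apply, comm_tmul, assoc_tmul,
    id_coe, id_eq, tmul_smul, smul_mul_assoc, mul_smul_comm]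

lemma W (f g h : H →ₗ[K] H) :
    wrap f g h = cv (f ∘ₗ piL) (cv (g ∘ₗ (piR : H ⊗[K] H →ₗ[K] H)) (h ∘ₗ piL)) := by
  rw [P' g h]
  apply TensorProduct.ext'; intro x y
  simp only [wrap, cv, comp_apply, LinearEquiv.coe_coe]
  rw [comulT_pt]
  have hX := congr_fun (congrArg DFunLike.coe (X3 f g h))
    ((Coalgebra.comul x : H ⊗[K] H) ⊗ₜ[K] (Coalgebra.comul y : H ⊗[K] H))
  simp only [comp_apply, LinearEquiv.coe_coe] at hX
  rw [hX]
  simp only [TensorProduct.map_tmul, id_coe, id_eq, piR_comul_pt]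

lemma M1 (F : H →ₗ[K] H) :
    mulB F = cv (F ∘ₗ piL) (cv ((piR : H ⊗[K] H →ₗ[K] H))
      (cv ((aS K H ∘ₗ F) ∘ₗ piL) piL)) := by
  show wrap F LinearMap.id (conv (aS K H ∘ₗ F) LinearMap.id) = _
  rw [W F LinearMap.id (conv (aS K H ∘ₗ F) LinearMap.id), id_comp]
  have hc : (conv (aS K H ∘ₗ F) LinearMap.id : H →ₗ[K] H)
      = cv (aS K H ∘ₗ F) LinearMap.id := rfl
  rw [hc, cv_comp (piL : H ⊗[K] H →ₗ[K] H) piL_coalgH, id_comp]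

lemma BtS (hcc : _root_.IsCocomm K H) (B : H →ₗ[K] H) :
    Bt B ∘ₗ aS K H = cv (aS K H) B := by
  have hc : (Bt B : H →ₗ[K] H) = cv LinearMap.id (B ∘ₗ aS K H) := rfl
  rw [hc, cv_comp (aS K H) (comulS hcc), id_comp, LinearMap.comp_assoc, SS hcc, comp_id]

lemma SBtS (hcc : _root_.IsCocomm K H) (B : H →ₗ[K] H) :
    aS K H ∘ₗ (Bt B ∘ₗ aS K H) = cv (aS K H ∘ₗ B) LinearMap.id := by
  rw [BtS hcc, S_cv (hccmap hcc), SS hcc]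

end Hopf

end RBAux

/-- `S(S(x) *_{B̃} S(y)) = x *_B y`. -/
theorem stmt6 (B : H →ₗ[K] H) (hcc : IsCocomm K H) (hB : IsRotaBaxter B) :
    ∀ x y : H, aS K H (mulB (Bt B) (aS K H x ⊗ₜ[K] aS K H y)) = mulB B (x ⊗ₜ[K] y) := by
  have hSS := RBAux.SS hcc
  have hccT := RBAux.ccT hcc
  have hφ := RBAux.mapSS_coalg hcc
  have hpiL : (RBAux.piL : H ⊗[K] H →ₗ[K] H) ∘ₗ TensorProduct.map (aS K H) (aS K H)
      = aS K H ∘ₗ RBAux.piL := RBAux.piL_nat (aS K H) (aS K H) RBAux.counitS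
  have hpiR : (RBAux.piR : H ⊗[K] H →ₗ[K] H) ∘ₗ TensorProduct.map (aS K H) (aS K H)
      = aS K H ∘ₗ RBAux.piR := RBAux.piR_nat (aS K H) (aS K H) RBAux.counitS
  have sss : ∀ X : H ⊗[K] H →ₗ[K] H, aS K H ∘ₗ (aS K H ∘ₗ X) = X := fun X => by
    rw [← LinearMap.comp_assoc, hSS, id_comp]
  have hmap : aS K H ∘ₗ mulB (Bt B) ∘ₗ TensorProduct.map (aS K H) (aS K H) = mulB B := by
    rw [RBAux.M1 (Bt B), RBAux.cv_comp _ hφ, RBAux.cv_comp _ hφ, RBAux.cv_comp _ hφ, hpiL, hpiR]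
    have c1 : ((Bt B) ∘ₗ RBAux.piL) ∘ₗ TensorProduct.map (aS K H) (aS K H)
        = (Bt B ∘ₗ aS K H) ∘ₗ RBAux.piL := by
      simp only [LinearMap.comp_assoc, hpiL]
    have c2 : ((aS K H ∘ₗ Bt B) ∘ₗ RBAux.piL) ∘ₗ TensorProduct.map (aS K H) (aS K H)
        = aS K H ∘ₗ ((Bt B ∘ₗ aS K H) ∘ₗ RBAux.piL) := by
      simp only [LinearMap.comp_assoc, hpiL]
    rw [c1, c2, RBAux.BtS hcc]
    simp only [RBAux.cv_comp (RBAux.piL : H ⊗[K] H →ₗ[K] H) RBAux.piL_coalgH]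
    simp only [RBAux.S_cv hccT, sss]
    rw [← RBAux.cv_assoc (RBAux.piL : H ⊗[K] H →ₗ[K] H), RBAux.eL, RBAux.cv_ce_left]
    rw [RBAux.cv_assoc]
    have c3 : aS K H ∘ₗ (B ∘ₗ (RBAux.piL : H ⊗[K] H →ₗ[K] H))
        = (aS K H ∘ₗ B) ∘ₗ RBAux.piL := (LinearMap.comp_assoc _ _ _).symm
    rw [c3, ← RBAux.M1]
  intro x y
  have h := congr_fun (congrArg DFunLike.coe hmap) (x ⊗ₜ[K] y)
  simpa only [comp_apply, TensorProduct.map_tmul] using h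

end
end

section
/- Let (H, B) be a Rota–Baxter Hopf algebra of weight −1. Then the image Im B = {B(x) : x ∈ H} is a Hopf subalgebra of H: it contains 1, it is closed under multiplication (for all x, y ∈ H there exists z ∈ H with B(x)B(y) = B(z)), it is closed under the antipode (for all x ∈ H there exists z ∈ H with S(B(x)) = B(z)), and the comultiplication maps it into Im B ⊗ Im B (Δ(B(x)) = B(x₁) ⊗ B(x₂) ∈ Im B ⊗ Im B). -/
open TensorProduct LinearMap

set_option linter.unusedSectionVars false

noncomputable section

universe u

variable {K H : Type u} [Field K] [CharZero K] [Ring H] [HopfAlgebra K H]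

/-! ### Auxiliary convolution algebra lemmas -/

/-- The unit of the convolution algebra. -/
def eL (K H : Type u) [Field K] [Ring H] [HopfAlgebra K H] : H →ₗ[K] H :=
  Algebra.linearMap K H ∘ₗ Coalgebra.counit

lemma conv_mk (f g : H →ₗ[K] H) (x : H) :
    conv f g x = LinearMap.mul' K H (TensorProduct.map f g (Coalgebra.comul x)) := rfl

lemma helperA (A : H →ₗ[K] H ⊗[K] H) (F : H ⊗[K] H →ₗ[K] H) (h : H →ₗ[K] H) :
    TensorProduct.map (F ∘ₗ A) h = TensorProduct.map F h ∘ₗ A.rTensor H := by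
  apply TensorProduct.ext'; intro x y; simp

lemma helperB (A : H →ₗ[K] H ⊗[K] H) (F : H ⊗[K] H →ₗ[K] H) (h : H →ₗ[K] H) :
    TensorProduct.map h (F ∘ₗ A) = TensorProduct.map h F ∘ₗ A.lTensor H := by
  apply TensorProduct.ext'; intro x y; simp

lemma conv_assoc (f g h : H →ₗ[K] H) : conv (conv f g) h = conv f (conv g h) := by
  have key : LinearMap.mul' K H ∘ₗ
        TensorProduct.map (LinearMap.mul' K H ∘ₗ TensorProduct.map f g) h
      = (LinearMap.mul' K H ∘ₗ
          TensorProduct.map f (LinearMap.mul' K H ∘ₗ TensorProduct.map g h)) ∘ₗ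
        (TensorProduct.assoc K H H H).toLinearMap := by
    apply TensorProduct.ext_threefold; intro x y z; simp [mul_assoc]
  ext x
  have e1 : conv (conv f g) h x
      = (LinearMap.mul' K H ∘ₗ
          TensorProduct.map (LinearMap.mul' K H ∘ₗ TensorProduct.map f g) h)
          ((Coalgebra.comul (R := K) (A := H)).rTensor H (Coalgebra.comul x)) := by
    rw [conv_mk]
    rw [show (conv f g : H →ₗ[K] H)
        = (LinearMap.mul' K H ∘ₗ TensorProduct.map f g) ∘ₗ Coalgebra.comul from rfl]
    rw [helperA]
    rfl
  rw [e1, key]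
  simp only [LinearMap.comp_apply, LinearEquiv.coe_coe]
  rw [Coalgebra.coassoc_apply]
  have e2 : TensorProduct.map f (LinearMap.mul' K H ∘ₗ TensorProduct.map g h)
        ((Coalgebra.comul (R := K) (A := H)).lTensor H (Coalgebra.comul x))
      = TensorProduct.map f (conv g h) (Coalgebra.comul x) := by
    rw [show (conv g h : H →ₗ[K] H)
        = (LinearMap.mul' K H ∘ₗ TensorProduct.map g h) ∘ₗ Coalgebra.comul from rfl]
    rw [helperB]
    rfl
  rw [e2]
  rfl

lemma conv_unit_left (f : H →ₗ[K] H) : conv (eL K H) f = f := by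
  have h1 : TensorProduct.map (eL K H) f
      = TensorProduct.map (Algebra.linearMap K H) f ∘ₗ
        (Coalgebra.counit (R := K) (A := H)).rTensor H := by
    apply TensorProduct.ext'; intro x y; simp [eL]
  ext x
  rw [conv_mk, h1]
  simp only [LinearMap.comp_apply]
  rw [Coalgebra.rTensor_counit_comul]
  simp [LinearMap.mul'_apply]

lemma conv_unit_right (f : H →ₗ[K] H) : conv f (eL K H) = f := by
  have h1 : TensorProduct.map f (eL K H)
      = TensorProduct.map f (Algebra.linearMap K H) ∘ₗ
        (Coalgebra.counit (R := K) (A := H)).lTensor H := by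
    apply TensorProduct.ext'; intro x y; simp [eL]
  ext x
  rw [conv_mk, h1]
  simp only [LinearMap.comp_apply]
  rw [Coalgebra.lTensor_counit_comul]
  simp [LinearMap.mul'_apply]

lemma conv_aS_id : conv (aS K H) (LinearMap.id : H →ₗ[K] H) = eL K H := by
  ext x
  rw [conv_mk]
  rw [show TensorProduct.map (aS K H) (LinearMap.id : H →ₗ[K] H)
      = (HopfAlgebra.antipode (R := K) (A := H)).rTensor H from rfl]
  rw [HopfAlgebra.mul_antipode_rTensor_comul_apply]
  simp [eL]

lemma conv_B_aSB (B : H →ₗ[K] H)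
    (hB1 : Coalgebra.comul ∘ₗ B = TensorProduct.map B B ∘ₗ Coalgebra.comul)
    (hB2 : Coalgebra.counit ∘ₗ B = Coalgebra.counit) :
    conv B (aS K H ∘ₗ B) = eL K H := by
  have h1 : TensorProduct.map B (aS K H ∘ₗ B)
      = (HopfAlgebra.antipode (R := K) (A := H)).lTensor H ∘ₗ TensorProduct.map B B := by
    apply TensorProduct.ext'; intro x y; simp [aS]
  ext x
  rw [conv_mk, h1]
  simp only [LinearMap.comp_apply]
  rw [show TensorProduct.map B B (Coalgebra.comul x) = Coalgebra.comul (B x) from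
    (LinearMap.congr_fun hB1 x).symm]
  rw [HopfAlgebra.mul_antipode_lTensor_comul_apply]
  rw [show Coalgebra.counit (R := K) (B x) = Coalgebra.counit (R := K) x from
    LinearMap.congr_fun hB2 x]
  simp [eL]

lemma conv_aSB_B (B : H →ₗ[K] H)
    (hB1 : Coalgebra.comul ∘ₗ B = TensorProduct.map B B ∘ₗ Coalgebra.comul)
    (hB2 : Coalgebra.counit ∘ₗ B = Coalgebra.counit) :
    conv (aS K H ∘ₗ B) B = eL K H := by
  have h1 : TensorProduct.map (aS K H ∘ₗ B) B
      = (HopfAlgebra.antipode (R := K) (A := H)).rTensor H ∘ₗ TensorProduct.map B B := by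
    apply TensorProduct.ext'; intro x y; simp [aS]
  ext x
  rw [conv_mk, h1]
  simp only [LinearMap.comp_apply]
  rw [show TensorProduct.map B B (Coalgebra.comul x) = Coalgebra.comul (B x) from
    (LinearMap.congr_fun hB1 x).symm]
  rw [HopfAlgebra.mul_antipode_rTensor_comul_apply]
  rw [show Coalgebra.counit (R := K) (B x) = Coalgebra.counit (R := K) x from
    LinearMap.congr_fun hB2 x]
  simp [eL]

lemma wrap_conv (hcc : IsCocomm K H) (f k h : H →ₗ[K] H) :
    wrap f LinearMap.id h ∘ₗ TensorProduct.map LinearMap.id k ∘ₗ Coalgebra.comul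
      = conv f (conv k h) := by
  set G : H ⊗[K] H →ₗ[K] H :=
    LinearMap.mul' K H ∘ₗ TensorProduct.map LinearMap.id h ∘ₗ
      (TensorProduct.comm K H H).toLinearMap with hG
  ext x
  have base : (wrap f LinearMap.id h ∘ₗ TensorProduct.map LinearMap.id k ∘ₗ
        Coalgebra.comul) x
      = LinearMap.mul' K H ((TensorProduct.map f G)
          ((TensorProduct.assoc K H H H)
            ((TensorProduct.map Coalgebra.comul LinearMap.id)
              ((TensorProduct.map LinearMap.id k) (Coalgebra.comul x))))) := rfl
  rw [base]
  -- move `k` past the comultiplication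
  have s1 : (TensorProduct.map (Coalgebra.comul (R := K) (A := H)) LinearMap.id) ∘ₗ
        TensorProduct.map LinearMap.id k
      = TensorProduct.map (TensorProduct.map LinearMap.id LinearMap.id) k ∘ₗ
        TensorProduct.map Coalgebra.comul LinearMap.id := by
    apply TensorProduct.ext'; intro a c; simp
  rw [show (TensorProduct.map Coalgebra.comul LinearMap.id)
        ((TensorProduct.map LinearMap.id k) (Coalgebra.comul x))
      = (TensorProduct.map (TensorProduct.map LinearMap.id LinearMap.id) k)
        ((TensorProduct.map Coalgebra.comul LinearMap.id) (Coalgebra.comul x)) from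
    LinearMap.congr_fun s1 (Coalgebra.comul x)]
  rw [← TensorProduct.map_map_assoc]
  rw [show (TensorProduct.assoc K H H H)
        ((TensorProduct.map Coalgebra.comul LinearMap.id) (Coalgebra.comul x))
      = (Coalgebra.comul (R := K) (A := H)).lTensor H (Coalgebra.comul x) from
    Coalgebra.coassoc_apply x]
  -- now everything lives on the right leg
  have s2 : TensorProduct.map (LinearMap.id : H →ₗ[K] H) (TensorProduct.map LinearMap.id k) ∘ₗ
        (Coalgebra.comul (R := K) (A := H)).lTensor H
      = TensorProduct.map LinearMap.id
          (TensorProduct.map LinearMap.id k ∘ₗ Coalgebra.comul) := by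
    apply TensorProduct.ext'; intro a c; simp
  rw [show (TensorProduct.map (LinearMap.id : H →ₗ[K] H) (TensorProduct.map LinearMap.id k))
        ((Coalgebra.comul (R := K) (A := H)).lTensor H (Coalgebra.comul x))
      = (TensorProduct.map LinearMap.id
          (TensorProduct.map LinearMap.id k ∘ₗ Coalgebra.comul)) (Coalgebra.comul x) from
    LinearMap.congr_fun s2 (Coalgebra.comul x)]
  have s3 : TensorProduct.map f G ∘ₗ
        TensorProduct.map (LinearMap.id : H →ₗ[K] H)
          (TensorProduct.map LinearMap.id k ∘ₗ Coalgebra.comul)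
      = TensorProduct.map f (G ∘ₗ TensorProduct.map LinearMap.id k ∘ₗ Coalgebra.comul) := by
    apply TensorProduct.ext'; intro a c; simp
  rw [show (TensorProduct.map f G)
        ((TensorProduct.map (LinearMap.id : H →ₗ[K] H)
          (TensorProduct.map LinearMap.id k ∘ₗ Coalgebra.comul)) (Coalgebra.comul x))
      = (TensorProduct.map f
          (G ∘ₗ TensorProduct.map LinearMap.id k ∘ₗ Coalgebra.comul)) (Coalgebra.comul x) from
    LinearMap.congr_fun s3 (Coalgebra.comul x)]
  -- identify the inner map with `conv k h`, using cocommutativity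
  have s4 : G ∘ₗ TensorProduct.map LinearMap.id k ∘ₗ Coalgebra.comul = conv k h := by
    ext a
    have c1 : (TensorProduct.comm K H H)
        ((TensorProduct.map LinearMap.id k) (Coalgebra.comul a))
        = (TensorProduct.map k LinearMap.id) (Coalgebra.comul a) := by
      rw [← TensorProduct.map_comm]
      rw [hcc a]
    have base2 : (G ∘ₗ TensorProduct.map LinearMap.id k ∘ₗ Coalgebra.comul) a
        = LinearMap.mul' K H ((TensorProduct.map LinearMap.id h)
            ((TensorProduct.comm K H H)
              ((TensorProduct.map LinearMap.id k) (Coalgebra.comul a)))) := rfl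
    rw [base2, c1]
    have s5 : TensorProduct.map (LinearMap.id : H →ₗ[K] H) h ∘ₗ
          TensorProduct.map k LinearMap.id = TensorProduct.map k h := by
      apply TensorProduct.ext'; intro u v; simp
    rw [show (TensorProduct.map (LinearMap.id : H →ₗ[K] H) h)
          ((TensorProduct.map k LinearMap.id) (Coalgebra.comul a))
        = (TensorProduct.map k h) (Coalgebra.comul a) from
      LinearMap.congr_fun s5 (Coalgebra.comul a)]
    rfl
  rw [s4]
  rfl

lemma rb_map (B : H →ₗ[K] H) (hB3 : ∀ x y : H, B x * B y = B (mulB B (x ⊗ₜ[K] y))) :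
    LinearMap.mul' K H ∘ₗ TensorProduct.map B B = B ∘ₗ mulB B := by
  apply TensorProduct.ext'; intro x y
  simp [LinearMap.mul'_apply, hB3 x y]

lemma B_one (B : H →ₗ[K] H) (hB : IsRotaBaxter B) : B 1 = 1 := by
  obtain ⟨hB1, hB2, hB3⟩ := hB
  have hg : Coalgebra.comul (R := K) (B 1) = B 1 ⊗ₜ[K] B 1 := by
    have h0 := LinearMap.congr_fun hB1 (1 : H)
    simpa [Algebra.TensorProduct.one_def] using h0
  have hε : Coalgebra.counit (R := K) (B 1) = 1 := by
    have h0 := LinearMap.congr_fun hB2 (1 : H)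
    simpa using h0
  have h2 : B 1 * HopfAlgebra.antipode (R := K) (B 1) = 1 := by
    have h0 := HopfAlgebra.mul_antipode_lTensor_comul_apply (R := K) (B 1)
    rw [hg] at h0
    simpa [hε, LinearMap.mul'_apply] using h0
  have h3 : HopfAlgebra.antipode (R := K) (B 1) * B 1 = 1 := by
    have h0 := HopfAlgebra.mul_antipode_rTensor_comul_apply (R := K) (B 1)
    rw [hg] at h0
    simpa [hε, LinearMap.mul'_apply] using h0
  have hmul1 : mulB B ((1 : H) ⊗ₜ[K] (1 : H)) = 1 := by
    have : mulB B ((1 : H) ⊗ₜ[K] (1 : H))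
        = B 1 * ((1 : H) * (HopfAlgebra.antipode (R := K) (B 1) * 1)) := by
      simp [mulB, wrap, conv, aS, Algebra.TensorProduct.one_def, LinearMap.mul'_apply]
    rw [this]
    simpa using h2
  have h4 : B 1 * B 1 = B 1 := by
    have h0 := hB3 1 1
    rw [hmul1] at h0
    exact h0
  calc B 1 = 1 * B 1 := (one_mul _).symm
    _ = (HopfAlgebra.antipode (R := K) (B 1) * B 1) * B 1 := by rw [h3]
    _ = HopfAlgebra.antipode (R := K) (B 1) * (B 1 * B 1) := mul_assoc _ _ _
    _ = HopfAlgebra.antipode (R := K) (B 1) * B 1 := by rw [h4]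
    _ = 1 := h3

lemma B_eL (B : H →ₗ[K] H) (hB : IsRotaBaxter B) : B ∘ₗ eL K H = eL K H := by
  ext x
  simp [eL, Algebra.algebraMap_eq_smul_one, map_smul, B_one B hB]

theorem aSB_eq (B : H →ₗ[K] H) (hcc : IsCocomm K H) (hB : IsRotaBaxter B) :
    aS K H ∘ₗ B = B ∘ₗ SB B := by
  obtain ⟨hB1, hB2, hB3⟩ := hB
  have hBaSB : conv B (aS K H ∘ₗ B) = eL K H := conv_B_aSB B hB1 hB2
  have haSBB : conv (aS K H ∘ₗ B) B = eL K H := conv_aSB_B B hB1 hB2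
  have hP : mulB B ∘ₗ TensorProduct.map LinearMap.id (SB B) ∘ₗ Coalgebra.comul
      = conv B (conv (SB B) (conv (aS K H ∘ₗ B) LinearMap.id)) :=
    wrap_conv hcc B (SB B) (conv (aS K H ∘ₗ B) LinearMap.id)
  have collapse : conv B (conv (SB B) (conv (aS K H ∘ₗ B) LinearMap.id)) = eL K H := by
    rw [show (SB B : H →ₗ[K] H)
        = conv (aS K H ∘ₗ B) (conv (aS K H) B) from rfl]
    rw [conv_assoc (aS K H ∘ₗ B) (conv (aS K H) B) (conv (aS K H ∘ₗ B) LinearMap.id)]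
    rw [← conv_assoc B (aS K H ∘ₗ B)
      (conv (conv (aS K H) B) (conv (aS K H ∘ₗ B) LinearMap.id))]
    rw [hBaSB, conv_unit_left]
    rw [conv_assoc (aS K H) B (conv (aS K H ∘ₗ B) LinearMap.id)]
    rw [← conv_assoc B (aS K H ∘ₗ B) LinearMap.id, hBaSB, conv_unit_left]
    exact conv_aS_id
  have hconvBT : conv B (B ∘ₗ SB B) = eL K H := by
    have m1 : TensorProduct.map B (B ∘ₗ SB B)
        = TensorProduct.map B B ∘ₗ TensorProduct.map LinearMap.id (SB B) := by
      apply TensorProduct.ext'; intro x y; simp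
    have e1 : conv B (B ∘ₗ SB B)
        = B ∘ₗ mulB B ∘ₗ TensorProduct.map LinearMap.id (SB B) ∘ₗ Coalgebra.comul := by
      ext x
      rw [conv_mk, m1]
      simp only [LinearMap.comp_apply]
      exact LinearMap.congr_fun (rb_map B hB3)
        ((TensorProduct.map LinearMap.id (SB B)) (Coalgebra.comul x))
    rw [e1, hP, collapse]
    exact B_eL B ⟨hB1, hB2, hB3⟩
  calc aS K H ∘ₗ B = conv (aS K H ∘ₗ B) (eL K H) := (conv_unit_right _).symm
    _ = conv (aS K H ∘ₗ B) (conv B (B ∘ₗ SB B)) := by rw [hconvBT]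
    _ = conv (conv (aS K H ∘ₗ B) B) (B ∘ₗ SB B) := (conv_assoc _ _ _).symm
    _ = conv (eL K H) (B ∘ₗ SB B) := by rw [haSBB]
    _ = B ∘ₗ SB B := conv_unit_left _

/-- `Im B` is a Hopf subalgebra of `H`. -/
theorem stmt8 (B : H →ₗ[K] H) (hcc : IsCocomm K H) (hB : IsRotaBaxter B) :
    ((1 : H) ∈ Set.range B) ∧
    (∀ x y : H, ∃ z : H, B x * B y = B z) ∧
    (∀ x : H, ∃ z : H, aS K H (B x) = B z) ∧
    (∀ x : H,
      Coalgebra.comul (R := K) (B x) = TensorProduct.map B B (Coalgebra.comul (R := K) x) ∧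
      Coalgebra.comul (R := K) (B x) ∈ LinearMap.range (TensorProduct.map B B)) := by
  refine ⟨⟨1, B_one B hB⟩, fun x y => ⟨mulB B (x ⊗ₜ[K] y), hB.2.2 x y⟩, fun x => ?_, fun x => ?_⟩
  · exact ⟨SB B x, LinearMap.congr_fun (aSB_eq B hcc hB) x⟩
  · have h0 : Coalgebra.comul (R := K) (B x)
        = TensorProduct.map B B (Coalgebra.comul (R := K) x) :=
      LinearMap.congr_fun hB.1 x
    exact ⟨h0, h0 ▸ LinearMap.mem_range_self _ _⟩

end
end
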